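/- arXiv:2005.00530 — 7 statements merged into one kernel-verified Lean document; each statement's English description precedes it below -/
import Mathlib

section
/- Let G = (V,E) be a finite regular directed graph of degree d ≥ 1, and suppose the vertices of V are colored red and blue. Let 0 < c ≤ 1, and let L ≥ 1 be an integer. If the number of walks of length L in G consisting entirely of red vertices is at least c·|V|·d^{L−1} (i.e., a simple random walk of length L is all red with probability at least c), then the number of walks of length L' := ⌊(1 + c²/10)·L⌋ consisting entirely of red vertices is at least (c²/10)·|V|·d^{L'−1} (i.e., a simple random walk of length L' is all red with probability at least c²/10). -/
/-- `isRedWalk E red L X` says that `X : Fin L → V` is a walk in the directed graph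
with edge relation `E` (i.e. consecutive vertices are joined by a directed edge)
all of whose vertices are red. -/
def isRedWalk {V : Type*} (E : V → V → Prop) (red : V → Prop) (L : ℕ)
    (X : Fin L → V) : Prop :=
  (∀ (j : ℕ) (hj : j + 1 < L), E (X ⟨j, Nat.lt_of_succ_lt hj⟩) (X ⟨j + 1, hj⟩)) ∧
    ∀ j, red (X j)

lemma card_sigma_const' {T : Type*} [Finite T] {F : T → Type*} [∀ t, Finite (F t)] {d : ℕ}
    (hF : ∀ t, Nat.card (F t) = d) : Nat.card ((t : T) × F t) = Nat.card T * d := by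
  have e : ∀ t, Nonempty (F t ≃ Fin d) := fun t => by
    have : Fintype (F t) := Fintype.ofFinite _
    exact ⟨Fintype.equivFinOfCardEq (by rw [← Nat.card_eq_fintype_card, hF])⟩
  have E2 : ((t : T) × F t) ≃ T × Fin d :=
    (Equiv.sigmaCongrRight (fun t => (e t).some)).trans (Equiv.sigmaEquivProd T (Fin d))
  rw [Nat.card_congr E2, Nat.card_prod]
  simp

lemma card_subtype_split {α : Type*} [Finite α] (P Q : α → Prop) :
    Nat.card {x // P x} = Nat.card {x // P x ∧ Q x} + Nat.card {x // P x ∧ ¬ Q x} := by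
  rw [← Nat.card_sum]
  apply Nat.card_congr
  refine Equiv.symm (Equiv.ofBijective
    (Sum.elim (fun x => ⟨x.1, x.2.1⟩) (fun x => ⟨x.1, x.2.1⟩)) ⟨?_, ?_⟩)
  · rintro (⟨x, hx, hqx⟩ | ⟨x, hx, hqx⟩) (⟨y, hy, hqy⟩ | ⟨y, hy, hqy⟩) hxy <;>
      simp only [Sum.elim_inl, Sum.elim_inr, Subtype.mk.injEq] at hxy <;> subst hxy
    · rfl
    · exact absurd hqx hqy
    · exact absurd hqy hqx
    · rfl
  · rintro ⟨x, hx⟩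
    by_cases hq : Q x
    · exact ⟨Sum.inl ⟨x, hx, hq⟩, rfl⟩
    · exact ⟨Sum.inr ⟨x, hx, hq⟩, rfl⟩

section aux
variable {V : Type*} (E : V → V → Prop) (red : V → Prop)

/-- the walk condition alone -/
def chainP (k : ℕ) (X : Fin k → V) : Prop :=
  ∀ (j : ℕ) (hj : j + 1 < k), E (X ⟨j, Nat.lt_of_succ_lt hj⟩) (X ⟨j + 1, hj⟩)

lemma chainP_snoc (k : ℕ) (Y : Fin (k+1) → V) (w : V) :
    chainP E (k+1+1) (Fin.snoc Y w) ↔ chainP E (k+1) Y ∧ E (Y (Fin.last k)) w := by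
  constructor
  · intro hc
    refine ⟨fun j hj => ?_, ?_⟩
    · have := hc j (by omega)
      rwa [show (⟨j, by omega⟩ : Fin (k+2)) = Fin.castSucc ⟨j, by omega⟩ from rfl,
        show (⟨j+1, by omega⟩ : Fin (k+2)) = Fin.castSucc ⟨j+1, hj⟩ from rfl,
        Fin.snoc_castSucc, Fin.snoc_castSucc] at this
    · have := hc k (by omega)
      rwa [show (⟨k, by omega⟩ : Fin (k+2)) = Fin.castSucc (Fin.last k) from rfl,
        show (⟨k+1, by omega⟩ : Fin (k+2)) = Fin.last (k+1) from rfl,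
        Fin.snoc_castSucc, Fin.snoc_last] at this
  · rintro ⟨hc, he⟩ j hj
    rcases Nat.lt_or_ge (j+1) (k+1) with h' | h'
    · rw [show (⟨j, Nat.lt_of_succ_lt hj⟩ : Fin (k+2)) = Fin.castSucc ⟨j, by omega⟩ from rfl,
        show (⟨j+1, hj⟩ : Fin (k+2)) = Fin.castSucc ⟨j+1, h'⟩ from rfl,
        Fin.snoc_castSucc, Fin.snoc_castSucc]
      exact hc j h'
    · have hjk : j = k := by omega
      subst hjk
      rw [show (⟨j, Nat.lt_of_succ_lt hj⟩ : Fin (j+2)) = Fin.castSucc (Fin.last j) from rfl,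
        show (⟨j+1, hj⟩ : Fin (j+2)) = Fin.last (j+1) from rfl,
        Fin.snoc_castSucc, Fin.snoc_last]
      exact he

lemma chainP_cons (k : ℕ) (Y : Fin (k+1) → V) (v : V) :
    chainP E (k+1+1) (Fin.cons v Y) ↔ E v (Y 0) ∧ chainP E (k+1) Y := by
  constructor
  · intro hc
    refine ⟨?_, fun j hj => ?_⟩
    · have := hc 0 (by omega)
      rwa [show (⟨0, by omega⟩ : Fin (k+2)) = (0 : Fin (k+2)) from rfl,
        show (⟨1, by omega⟩ : Fin (k+2)) = Fin.succ 0 from rfl,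
        Fin.cons_zero, Fin.cons_succ] at this
    · have := hc (j+1) (by omega)
      rwa [show (⟨j+1, by omega⟩ : Fin (k+2)) = Fin.succ ⟨j, by omega⟩ from rfl,
        show (⟨j+1+1, by omega⟩ : Fin (k+2)) = Fin.succ ⟨j+1, hj⟩ from rfl,
        Fin.cons_succ, Fin.cons_succ] at this
  · rintro ⟨he, hc⟩ j hj
    match j with
    | 0 =>
      rw [show (⟨0, by omega⟩ : Fin (k+2)) = (0 : Fin (k+2)) from rfl,
        show (⟨1, hj⟩ : Fin (k+2)) = Fin.succ 0 from rfl, Fin.cons_zero, Fin.cons_succ]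
      exact he
    | (i+1) =>
      rw [show (⟨i+1, by omega⟩ : Fin (k+2)) = Fin.succ ⟨i, by omega⟩ from rfl,
        show (⟨i+1+1, hj⟩ : Fin (k+2)) = Fin.succ ⟨i+1, by omega⟩ from rfl,
        Fin.cons_succ, Fin.cons_succ]
      exact hc i (by omega)

lemma chainP_init (k : ℕ) (X : Fin (k+1+1) → V) (h : chainP E (k+1+1) X) :
    chainP E (k+1) (Fin.init X) := by
  intro j hj
  have := h j (by omega)
  rwa [show Fin.init X ⟨j, by omega⟩ = X ⟨j, by omega⟩ from rfl,
    show Fin.init X ⟨j+1, hj⟩ = X ⟨j+1, by omega⟩ from rfl]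

lemma chainP_tail (k : ℕ) (X : Fin (k+1+1) → V) (h : chainP E (k+1+1) X) :
    chainP E (k+1) (Fin.tail X) := by
  intro j hj
  have := h (j+1) (by omega)
  rwa [show Fin.tail X ⟨j, by omega⟩ = X ⟨j+1, by omega⟩ from rfl,
    show Fin.tail X ⟨j+1, hj⟩ = X ⟨j+1+1, by omega⟩ from rfl]

variable [Fintype V]

/-- number of all-red walks of length `k` -/
noncomputable def Wn (k : ℕ) : ℕ := Nat.card {X : Fin k → V // isRedWalk E red k X}

/-- number of walks of length `k+1` whose first `k` vertices are red and last is blue -/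
noncomputable def Dn (k : ℕ) : ℕ := Nat.card {X : Fin (k+1) → V //
  (chainP E (k+1) X ∧ ∀ j : Fin k, red (X j.castSucc)) ∧ ¬ red (X (Fin.last k))}

variable {d : ℕ}

/-- `d·W(k+1) = W(k+2) + D(k+1)` -/
lemma walkF1 (hout : ∀ v, Nat.card {w // E v w} = d) (k : ℕ) :
    d * Wn E red (k+1) = Wn E red (k+2) + Dn E red (k+1) := by
  classical
  have key : Nat.card {X : Fin (k+1+1) → V //
      chainP E (k+1+1) X ∧ ∀ j : Fin (k+1), red (X j.castSucc)} = Wn E red (k+1) * d := by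
    simp only [Wn]
    rw [← card_sigma_const' (T := {Y : Fin (k+1) → V // isRedWalk E red (k+1) Y})
      (F := fun Y => {w : V // E (Y.1 (Fin.last k)) w}) (fun Y => hout _)]
    apply Nat.card_congr
    refine Equiv.symm (Equiv.ofBijective (fun Yw => ⟨Fin.snoc Yw.1.1 Yw.2.1, by
      refine ⟨(chainP_snoc E k _ _).2 ⟨Yw.1.2.1, Yw.2.2⟩, fun j => ?_⟩
      rw [Fin.snoc_castSucc]
      exact Yw.1.2.2 j⟩) ⟨?_, ?_⟩)
    · rintro ⟨⟨Y, hY⟩, ⟨w, hw⟩⟩ ⟨⟨Y', hY'⟩, ⟨w', hw'⟩⟩ hxy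
      simp only [Subtype.mk.injEq] at hxy
      have hYY : Y = Y' := by
        rw [← Fin.init_snoc (α := fun _ => V) (x := w) (p := Y),
          ← Fin.init_snoc (α := fun _ => V) (x := w') (p := Y'), hxy]
      have hww : w = w' := by
        rw [← Fin.snoc_last (α := fun _ => V) (x := w) (p := Y),
          ← Fin.snoc_last (α := fun _ => V) (x := w') (p := Y'), hxy]
      subst hYY; subst hww; rfl
    · rintro ⟨X, hX, hred⟩
      refine ⟨⟨⟨Fin.init X, chainP_init E k X hX, fun j => hred j⟩,
        ⟨X (Fin.last (k+1)), ?_⟩⟩, ?_⟩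
      · have := hX k (by omega)
        rwa [show (⟨k, by omega⟩ : Fin (k+2)) = Fin.castSucc (Fin.last k) from rfl,
          show (⟨k+1, by omega⟩ : Fin (k+2)) = Fin.last (k+1) from rfl] at this
      · exact Subtype.ext (Fin.snoc_init_self X)
  have split := card_subtype_split
    (fun X : Fin (k+1+1) → V => chainP E (k+1+1) X ∧ ∀ j : Fin (k+1), red (X j.castSucc))
    (fun X => red (X (Fin.last (k+1))))
  rw [key] at split
  have wn2 : Nat.card {X : Fin (k+1+1) → V //
      (chainP E (k+1+1) X ∧ ∀ j : Fin (k+1), red (X j.castSucc)) ∧ red (X (Fin.last (k+1)))}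
      = Wn E red (k+2) := by
    apply Nat.card_congr
    refine Equiv.subtypeEquivRight (fun X => ?_)
    constructor
    · rintro ⟨⟨hc, hr⟩, hl⟩
      refine ⟨hc, fun j => ?_⟩
      rcases Fin.eq_castSucc_or_eq_last j with ⟨i, rfl⟩ | rfl
      · exact hr i
      · exact hl
    · rintro ⟨hc, hr⟩
      exact ⟨⟨hc, fun j => hr _⟩, hr _⟩
  rw [wn2] at split
  rw [mul_comm]
  exact split

/-- `D(k+1) ≤ d·D(k)` -/
lemma walkF2 (hin : ∀ v, Nat.card {w // E w v} = d) (k : ℕ) :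
    Dn E red (k+1) ≤ d * Dn E red k := by
  classical
  have key : Nat.card {X : Fin (k+1+1) → V // chainP E (k+1+1) X ∧
      (∀ j : Fin k, red (X j.castSucc.succ)) ∧ ¬ red (X (Fin.last (k+1)))}
      = Dn E red k * d := by
    simp only [Dn]
    rw [← card_sigma_const' (T := {Y : Fin (k+1) → V //
        (chainP E (k+1) Y ∧ ∀ j : Fin k, red (Y j.castSucc)) ∧ ¬ red (Y (Fin.last k))})
      (F := fun Y => {v : V // E v (Y.1 0)}) (fun Y => hin _)]
    apply Nat.card_congr
    refine Equiv.symm (Equiv.ofBijective (fun Yv => ⟨Fin.cons Yv.2.1 Yv.1.1, by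
      refine ⟨(chainP_cons E k _ _).2 ⟨Yv.2.2, Yv.1.2.1.1⟩, fun j => ?_, ?_⟩
      · rw [Fin.cons_succ]
        exact Yv.1.2.1.2 j
      · rw [show Fin.last (k+1) = Fin.succ (Fin.last k) from rfl, Fin.cons_succ]
        exact Yv.1.2.2⟩) ⟨?_, ?_⟩)
    · rintro ⟨⟨Y, hY⟩, ⟨v, hv⟩⟩ ⟨⟨Y', hY'⟩, ⟨v', hv'⟩⟩ hxy
      simp only [Subtype.mk.injEq] at hxy
      have hYY : Y = Y' := by
        rw [← Fin.tail_cons (α := fun _ => V) v Y, ← Fin.tail_cons (α := fun _ => V) v' Y', hxy]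
      have hvv : v = v' := by
        rw [← Fin.cons_zero (α := fun _ => V) v Y, ← Fin.cons_zero (α := fun _ => V) v' Y', hxy]
      subst hYY; subst hvv; rfl
    · rintro ⟨X, hX, hred, hblue⟩
      refine ⟨⟨⟨Fin.tail X, ⟨chainP_tail E k X hX, fun j => hred j⟩, hblue⟩,
        ⟨X 0, ?_⟩⟩, ?_⟩
      · exact hX 0 (by omega)
      · exact Subtype.ext (Fin.cons_self_tail X)
  calc Dn E red (k+1) ≤ Nat.card {X : Fin (k+1+1) → V // chainP E (k+1+1) X ∧
      (∀ j : Fin k, red (X j.castSucc.succ)) ∧ ¬ red (X (Fin.last (k+1)))} := by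
        simp only [Dn]
        apply Nat.card_mono (Set.toFinite _)
        rintro X ⟨⟨hc, hr⟩, hb⟩
        refine ⟨hc, fun j => ?_, hb⟩
        rw [Fin.succ_castSucc]
        exact hr j.succ
    _ = Dn E red k * d := key
    _ = d * Dn E red k := mul_comm _ _

/-- `W(1) ≤ |V|` -/
lemma walkF3 : Wn E red 1 ≤ Fintype.card V := by
  calc Wn E red 1 ≤ Nat.card (Fin 1 → V) :=
      Nat.card_le_card_of_injective Subtype.val Subtype.val_injective
    _ = Fintype.card V := by simp [Nat.card_eq_fintype_card]
end aux

section numeric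
variable (Wn Dn : ℕ → ℕ) (d : ℕ)
  (hF1 : ∀ k, d * Wn (k+1) = Wn (k+2) + Dn (k+1))
  (hF2 : ∀ k, Dn (k+1) ≤ d * Dn k)

include hF2 in
lemma F2iter : ∀ k i, Dn (k+i) ≤ d^i * Dn k := by
  intro k i
  induction i with
  | zero => simp
  | succ i ih =>
    calc Dn (k+i+1) ≤ d * Dn (k+i) := hF2 _
      _ ≤ d * (d^i * Dn k) := Nat.mul_le_mul_left d ih
      _ = d^(i+1) * Dn k := by ring

include hF1 hF2 in
lemma lemS : ∀ m, Wn (m+2) + (m+1) * Dn (m+1) ≤ d^(m+1) * Wn 1 := by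
  intro m
  induction m with
  | zero => simp [← hF1 0]
  | succ m ih =>
    have h2 := hF2 (m+1)
    calc Wn (m+3) + (m+2) * Dn (m+2)
        = (Wn (m+3) + Dn (m+2)) + (m+1) * Dn (m+2) := by ring
      _ = d * Wn (m+2) + (m+1) * Dn (m+2) := by rw [← hF1 (m+1)]
      _ ≤ d * Wn (m+2) + (m+1) * (d * Dn (m+1)) :=
          Nat.add_le_add_left (Nat.mul_le_mul_left _ h2) _
      _ = d * (Wn (m+2) + (m+1) * Dn (m+1)) := by ring
      _ ≤ d * (d^(m+1) * Wn 1) := Nat.mul_le_mul_left d ih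
      _ = d^(m+2) * Wn 1 := by ring

include hF1 hF2 in
lemma lemT : ∀ m j, d^j * Wn (m+2) ≤ Wn (m+2+j) + j * d^j * Dn (m+1) := by
  intro m j
  induction j with
  | zero => simp
  | succ j ih =>
    have hiter : Dn (m+2+j) ≤ d^(j+1) * Dn (m+1) := by
      have := F2iter Dn d hF2 (m+1) (j+1)
      calc Dn (m+2+j) = Dn ((m+1)+(j+1)) := by ring_nf
        _ ≤ d^(j+1) * Dn (m+1) := this
    calc d^(j+1) * Wn (m+2) = d * (d^j * Wn (m+2)) := by ring
      _ ≤ d * (Wn (m+2+j) + j * d^j * Dn (m+1)) := Nat.mul_le_mul_left d ih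
      _ = d * Wn (m+2+j) + j * d^(j+1) * Dn (m+1) := by ring
      _ = Wn (m+2+j+1) + Dn (m+2+j) + j * d^(j+1) * Dn (m+1) := by
          rw [show m+2+j+1 = (m+1+j)+2 from by ring, show m+2+j = (m+1+j)+1 from by ring,
            ← hF1 (m+1+j)]
      _ ≤ Wn (m+2+(j+1)) + d^(j+1) * Dn (m+1) + j * d^(j+1) * Dn (m+1) := by
          have : m+2+j+1 = m+2+(j+1) := by ring
          rw [this]
          exact Nat.add_le_add_right (Nat.add_le_add_left hiter _) _
      _ = Wn (m+2+(j+1)) + (j+1) * d^(j+1) * Dn (m+1) := by ring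
end numeric

set_option maxHeartbeats 1000000 in
/-- Bootstrapping for random walks on regular directed graphs: if `G` is a finite
regular directed graph of degree `d ≥ 1` whose vertices are coloured red or blue and
the number of all-red walks of length `L ≥ 1` is at least `c·|V|·d^{L−1}` (with
`0 < c ≤ 1`), then the number of all-red walks of length `L' := ⌊(1 + c²/10)·L⌋` is
at least `(c²/10)·|V|·d^{L'−1}`. -/
theorem stmt2 {V : Type*} [Fintype V] (E : V → V → Prop) (d : ℕ) (hd : 1 ≤ d)
    (hout : ∀ v, Nat.card {w // E v w} = d) (hin : ∀ v, Nat.card {w // E w v} = d)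
    (red : V → Prop) (c : ℝ) (hc0 : 0 < c) (hc1 : c ≤ 1) (L : ℕ) (hL : 1 ≤ L)
    (h : c * (Fintype.card V : ℝ) * (d : ℝ) ^ (L - 1) ≤
      (Nat.card {X : Fin L → V // isRedWalk E red L X} : ℝ)) :
    (c ^ 2 / 10) * (Fintype.card V : ℝ) * (d : ℝ) ^ (⌊(1 + c ^ 2 / 10) * (L : ℝ)⌋₊ - 1) ≤
      (Nat.card {X : Fin ⌊(1 + c ^ 2 / 10) * (L : ℝ)⌋₊ → V //
        isRedWalk E red ⌊(1 + c ^ 2 / 10) * (L : ℝ)⌋₊ X} : ℝ) := by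
  classical
  have hc2 : (0:ℝ) < c^2/10 := by positivity
  set L' := ⌊(1 + c ^ 2 / 10) * (L : ℝ)⌋₊ with hL'def
  show (c ^ 2 / 10) * (Fintype.card V : ℝ) * (d : ℝ) ^ (L' - 1) ≤ (Wn E red L' : ℝ)
  have hh : c * (Fintype.card V : ℝ) * (d : ℝ) ^ (L - 1) ≤ (Wn E red L : ℝ) := h
  have hLle : L ≤ L' := by
    apply Nat.le_floor
    have h0 : (0:ℝ) ≤ (L:ℝ) := by positivity
    nlinarith
  have hc2le : c^2/10 ≤ c := by nlinarith
  rcases eq_or_lt_of_le hLle with hEq | hLt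
  · rw [← hEq]
    calc (c ^ 2 / 10) * (Fintype.card V : ℝ) * (d : ℝ) ^ (L - 1)
        ≤ c * (Fintype.card V : ℝ) * (d : ℝ) ^ (L - 1) := by
          have hnn : (0:ℝ) ≤ (Fintype.card V : ℝ) * (d : ℝ) ^ (L - 1) := by positivity
          nlinarith
      _ ≤ (Wn E red L : ℝ) := hh
  · -- L < L'.  First, L ≥ 2.
    have hL2 : 2 ≤ L := by
      by_contra hcon
      have hL1 : L = 1 := by omega
      have : L' < 2 := by
        rw [hL'def]
        have hlt : (1 + c ^ 2 / 10) * (L : ℝ) < 2 := by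
          rw [hL1]; push_cast; nlinarith
        exact (Nat.floor_lt (by positivity)).2 (by exact_mod_cast hlt)
      omega
    obtain ⟨m, rfl⟩ : ∃ m, L = m + 2 := ⟨L - 2, by omega⟩
    have hjdef : ∃ j, 1 ≤ j ∧ L' = m + 2 + j := ⟨L' - (m+2), by omega, by omega⟩
    obtain ⟨j, hj1, hL'eq⟩ := hjdef
    -- numeric facts in ℕ
    have hF1 := walkF1 E red hout
    have hF2 := walkF2 E red hin
    have hS : Wn E red (m+2) + (m+1) * Dn E red (m+1) ≤ d^(m+1) * Fintype.card V :=
      le_trans (lemS (Wn E red) (Dn E red) d hF1 hF2 m)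
        (Nat.mul_le_mul_left _ (walkF3 E red))
    have hT : d^j * Wn E red (m+2) ≤ Wn E red L' + j * d^j * Dn E red (m+1) := by
      rw [hL'eq]
      exact lemT (Wn E red) (Dn E red) d hF1 hF2 m j
    -- real versions
    have hSR : (Wn E red (m+2) : ℝ) + ((m:ℝ)+1) * (Dn E red (m+1) : ℝ) ≤
        (d:ℝ)^(m+1) * (Fintype.card V : ℝ) := by exact_mod_cast hS
    have hTR : (d:ℝ)^j * (Wn E red (m+2) : ℝ) ≤
        (Wn E red L' : ℝ) + (j:ℝ) * (d:ℝ)^j * (Dn E red (m+1) : ℝ) := by exact_mod_cast hT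
    have hWR : c * (Fintype.card V : ℝ) * (d:ℝ)^(m+1) ≤ (Wn E red (m+2) : ℝ) := hh
    -- bound on j
    have hjR : (j:ℝ) ≤ c^2 * ((m:ℝ)+2) / 10 := by
      have h1 : (L' : ℝ) ≤ (1 + c ^ 2 / 10) * ((m:ℝ) + 2) := by
        rw [hL'def]
        have hfl := Nat.floor_le (R := ℝ) (a := (1 + c ^ 2 / 10) * (((m:ℕ) + 2 : ℕ) : ℝ))
          (by positivity)
        push_cast at hfl ⊢
        linarith
      have h2 : (L' : ℝ) = (m:ℝ) + 2 + (j:ℝ) := by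
        rw [hL'eq]; push_cast; ring
      nlinarith
    have hj' : (j:ℝ) ≤ c^2 * ((m:ℝ)+1) / 5 := by nlinarith
    -- abbreviations (plain reals)
    have hm1 : (0:ℝ) < (m:ℝ)+1 := by positivity
    have hexp : ((d:ℝ))^(L' - 1) = (d:ℝ)^(m+1) * (d:ℝ)^j := by
      rw [show L' - 1 = (m+1) + j from by omega, pow_add]
    rw [hexp]
    have hgap : ((m:ℝ)+1) * (Dn E red (m+1) : ℝ) ≤
        (d:ℝ)^(m+1) * (Fintype.card V : ℝ) - (Wn E red (m+2) : ℝ) := by linarith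
    have key : ((m:ℝ)+1) * (c^2/10 * (Fintype.card V : ℝ) * ((d:ℝ)^(m+1) * (d:ℝ)^j)) ≤
        ((m:ℝ)+1) * (Wn E red L' : ℝ) := by
      have h1 : ((m:ℝ)+1) * ((d:ℝ)^j * (Wn E red (m+2) : ℝ)) ≤
          ((m:ℝ)+1) * ((Wn E red L' : ℝ) + (j:ℝ) * (d:ℝ)^j * (Dn E red (m+1) : ℝ)) :=
        mul_le_mul_of_nonneg_left hTR hm1.le
      have h2 : (j:ℝ) * (d:ℝ)^j * (((m:ℝ)+1) * (Dn E red (m+1) : ℝ)) ≤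
          (j:ℝ) * (d:ℝ)^j * ((d:ℝ)^(m+1) * (Fintype.card V : ℝ) - (Wn E red (m+2) : ℝ)) :=
        mul_le_mul_of_nonneg_left hgap (by positivity)
      have h3 : (((m:ℝ)+1) + (j:ℝ)) * (d:ℝ)^j * (c * (Fintype.card V : ℝ) * (d:ℝ)^(m+1)) ≤
          (((m:ℝ)+1) + (j:ℝ)) * (d:ℝ)^j * (Wn E red (m+2) : ℝ) :=
        mul_le_mul_of_nonneg_left hWR (by positivity)
      have h4 : (j:ℝ) * ((1-c) * ((d:ℝ)^j * ((d:ℝ)^(m+1) * (Fintype.card V : ℝ)))) ≤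
          (c^2 * ((m:ℝ)+1) / 5) * ((1-c) * ((d:ℝ)^j * ((d:ℝ)^(m+1) * (Fintype.card V : ℝ)))) :=
        mul_le_mul_of_nonneg_right hj' (by
          have h1c : (0:ℝ) ≤ 1 - c := by linarith
          positivity)
      have h5 : (0:ℝ) ≤ ((m:ℝ)+1) * ((d:ℝ)^j * ((d:ℝ)^(m+1) * (Fintype.card V : ℝ)))
          * (c * (10 - 3*c)) := by
        have h10 : (0:ℝ) ≤ 10 - 3*c := by linarith
        positivity
      have h6 : (0:ℝ) ≤ ((m:ℝ)+1) * ((d:ℝ)^j * ((d:ℝ)^(m+1) * (Fintype.card V : ℝ))) * c^3 := by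
        positivity
      linarith [h1, h2, h3, h4, h5, h6]
    exact le_of_mul_le_mul_left key hm1
end

section
/- Let a_1,…,a_i be non-negative integers with d := max_j a_j ≥ 1. Let L denote the maximum length of a contiguous run a_{j_1+1},…,a_{j_1'} whose terms all lie in {0,d} and which contains at least one term equal to d (i.e., the length of the longest {0,d}-block containing at least one d). If L ≤ i−1, then after L iterations of consecutive differencing applied to a_1,…,a_i, every remaining term is at most d−1. -/
/-- `iterDiff i a` is the sequence obtained from `a` after `i` iterations of
consecutive differencing: `iterDiff i a r = f_i(a_r, a_{r+1}, …, a_{r+i})`. -/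
def iterDiff (i : ℕ) (a : ℕ → ℕ) : ℕ → ℕ :=
  (fun b n => Nat.dist (b n) (b (n + 1)))^[i] a

lemma iterDiff_succ (k : ℕ) (a : ℕ → ℕ) :
    iterDiff (k + 1) a = iterDiff k (fun n => Nat.dist (a n) (a (n + 1))) := by
  simp [iterDiff, Function.iterate_succ_apply]

lemma iterDiff_bound (d : ℕ) : ∀ (k : ℕ) (a : ℕ → ℕ) (r : ℕ),
    (∀ j, r ≤ j → j ≤ r + k → a j ≤ d) → iterDiff k a r ≤ d := by
  intro k
  induction k with
  | zero => intro a r h; simpa [iterDiff] using h r le_rfl (by omega)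
  | succ k ih =>
    intro a r h
    rw [iterDiff_succ]
    apply ih
    intro j hj1 hj2
    have h1 := h j (by omega) (by omega)
    have h2 := h (j + 1) (by omega) (by omega)
    simp [Nat.dist]; omega

lemma iterDiff_eq_max (d : ℕ) (hd : 1 ≤ d) : ∀ (k : ℕ) (a : ℕ → ℕ) (r : ℕ),
    (∀ j, r ≤ j → j ≤ r + k → a j ≤ d) → iterDiff k a r = d →
    (∀ j, r ≤ j → j ≤ r + k → a j = 0 ∨ a j = d) ∧
      ∃ j, r ≤ j ∧ j ≤ r + k ∧ a j = d := by
  intro k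
  induction k with
  | zero =>
    intro a r h heq
    simp only [iterDiff, Function.iterate_zero, id] at heq
    constructor
    · intro j hj1 hj2
      have : j = r := by omega
      subst this; exact Or.inr heq
    · exact ⟨r, le_rfl, by omega, heq⟩
  | succ k ih =>
    intro a r h heq
    rw [iterDiff_succ] at heq
    set b : ℕ → ℕ := fun n => Nat.dist (a n) (a (n + 1)) with hb
    have hbd : ∀ j, r ≤ j → j ≤ r + k → b j ≤ d := by
      intro j hj1 hj2
      have h1 := h j (by omega) (by omega)
      have h2 := h (j + 1) (by omega) (by omega)
      simp [hb, Nat.dist]; omega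
    obtain ⟨hall, m, hm1, hm2, hm3⟩ := ih b r hbd heq
    -- at position m, `Nat.dist (a m) (a (m+1)) = d`, so both are in {0,d}
    have ham : (a m = 0 ∧ a (m + 1) = d) ∨ (a m = d ∧ a (m + 1) = 0) := by
      have h1 := h m (by omega) (by omega)
      have h2 := h (m + 1) (by omega) (by omega)
      simp [hb, Nat.dist] at hm3; omega
    have hstep : ∀ j, r ≤ j → j ≤ r + k →
        (a j = 0 ∨ a j = d) → (a (j + 1) = 0 ∨ a (j + 1) = d) := by
      intro j hj1 hj2 hja
      have := hall j hj1 hj2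
      have h2 := h (j + 1) (by omega) (by omega)
      simp [hb, Nat.dist] at this; omega
    have hstep' : ∀ j, r ≤ j → j ≤ r + k →
        (a (j + 1) = 0 ∨ a (j + 1) = d) → (a j = 0 ∨ a j = d) := by
      intro j hj1 hj2 hja
      have := hall j hj1 hj2
      have h2 := h j (by omega) (by omega)
      simp [hb, Nat.dist] at this; omega
    have ham0 : a m = 0 ∨ a m = d := by omega
    -- forward propagation
    have fwd : ∀ t, m + t ≤ r + (k + 1) → a (m + t) = 0 ∨ a (m + t) = d := by
      intro t
      induction t with
      | zero => intro _; exact ham0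
      | succ t iht =>
        intro ht
        have prev := iht (by omega)
        exact hstep (m + t) (by omega) (by omega) prev
    -- backward propagation
    have bwd : ∀ t, t ≤ m - r → a (m - t) = 0 ∨ a (m - t) = d := by
      intro t
      induction t with
      | zero => intro _; exact ham0
      | succ t iht =>
        intro ht
        have prev := iht (by omega)
        have hmt : m - (t + 1) + 1 = m - t := by omega
        have := hstep' (m - (t + 1)) (by omega) (by omega) (by rw [hmt]; exact prev)
        exact this
    constructor
    · intro j hj1 hj2
      rcases le_or_gt m j with hc | hc
      · have := fwd (j - m) (by omega)
        rwa [show m + (j - m) = j by omega] at this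
      · have := bwd (m - j) (by omega)
        rwa [show m - (m - j) = j by omega] at this
    · rcases ham with ⟨_, h1⟩ | ⟨h1, _⟩
      · exact ⟨m + 1, by omega, by omega, h1⟩
      · exact ⟨m, by omega, by omega, h1⟩

/-- Let `a 0, …, a (i-1)` be non-negative integers with `d := max_j a j ≥ 1`.
Let `L` be the maximum length of a contiguous run of terms all lying in `{0, d}`
containing at least one term equal to `d`.  If `L ≤ i − 1`, then after `L`
iterations of consecutive differencing every remaining term is at most `d − 1`. -/
theorem stmt3 (i : ℕ) (a : ℕ → ℕ) (d L : ℕ) (hd : 1 ≤ d)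
    (hmax : ∀ j, j < i → a j ≤ d) (hattain : ∃ j, j < i ∧ a j = d)
    -- `L` is an upper bound on the length of any `{0,d}`-block containing a `d` …
    (hub : ∀ l len, l + len ≤ i →
      (∀ j, l ≤ j → j < l + len → a j = 0 ∨ a j = d) →
      (∃ j, l ≤ j ∧ j < l + len ∧ a j = d) → len ≤ L)
    -- … and this bound is attained.
    (hex : ∃ l, l + L ≤ i ∧ (∀ j, l ≤ j → j < l + L → a j = 0 ∨ a j = d) ∧
      ∃ j, l ≤ j ∧ j < l + L ∧ a j = d)
    (hLi : L ≤ i - 1) :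
    ∀ r, r + L < i → iterDiff L a r ≤ d - 1 := by
  intro r hr
  have hwin : ∀ j, r ≤ j → j ≤ r + L → a j ≤ d := fun j _ hj2 => hmax j (by omega)
  have hle : iterDiff L a r ≤ d := iterDiff_bound d L a r hwin
  by_contra hcon
  have heq : iterDiff L a r = d := by omega
  obtain ⟨hall, j, hj1, hj2, hj3⟩ := iterDiff_eq_max d hd L a r hwin heq
  have := hub r (L + 1) (by omega)
    (fun j hj1 hj2 => hall j hj1 (by omega))
    ⟨j, hj1, by omega, hj3⟩
  omega
end

section
/- Let a_1,…,a_n be non-negative integers, let d ≥ 1, and let i ≥ 0. Suppose that after i iterations of consecutive differencing applied to a_1,…,a_n there are L consecutive terms all divisible by d (a dℤ-block of length L). Then either the initial sequence a_1,…,a_n contains L+i consecutive terms all divisible by d, or there exists i' with 0 ≤ i' ≤ i−1 such that after i' iterations of consecutive differencing there are L+i−i' consecutive terms all nonzero. -/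
lemma iterDiff_succ_s4 (i : ℕ) (a : ℕ → ℕ) (r : ℕ) :
    iterDiff (i + 1) a r = Nat.dist (iterDiff i a r) (iterDiff i a (r + 1)) := by
  simp [iterDiff, Function.iterate_succ_apply']

lemma dvd_of_dvd_dist {d x y : ℕ} (h : d ∣ Nat.dist x y) (hx : d ∣ x) : d ∣ y := by
  rcases le_total x y with hle | hle
  · rw [Nat.dist_eq_sub_of_le hle] at h
    have := Nat.dvd_add h hx
    rwa [Nat.sub_add_cancel hle] at this
  · rw [Nat.dist_eq_sub_of_le_right hle] at h
    have := Nat.dvd_sub hx h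
    rwa [Nat.sub_sub_self hle] at this

lemma dvd_of_dvd_dist' {d x y : ℕ} (h : d ∣ Nat.dist x y) (hy : d ∣ y) : d ∣ x :=
  dvd_of_dvd_dist (Nat.dist_comm x y ▸ h) hy

/-- Let `a 0, …, a (n-1)` be non-negative integers, `d ≥ 1`, `i ≥ 0`.  If after `i`
iterations of consecutive differencing there are `L` consecutive terms all divisible
by `d`, then either the initial sequence contains `L + i` consecutive terms all
divisible by `d`, or there is some `i' < i` such that after `i'` iterations there are
`L + i − i'` consecutive terms, all nonzero. -/
theorem stmt4 (n : ℕ) (a : ℕ → ℕ) (d : ℕ) (hd : 1 ≤ d) (i L : ℕ) (hL : 1 ≤ L)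
    (p : ℕ) (hp : p + L + i ≤ n)
    (hblock : ∀ r, p ≤ r → r < p + L → d ∣ iterDiff i a r) :
    (∃ q, q + (L + i) ≤ n ∧ ∀ r, q ≤ r → r < q + (L + i) → d ∣ a r) ∨
      (∃ i', i' < i ∧ ∃ q, q + (L + i - i') + i' ≤ n ∧
        ∀ r, q ≤ r → r < q + (L + i - i') → iterDiff i' a r ≠ 0) := by
  induction i generalizing L p with
  | zero =>
    left
    exact ⟨p, by omega, fun r h1 h2 => hblock r h1 (by omega)⟩
  | succ k ih =>
    have hdist : ∀ r, p ≤ r → r < p + L →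
        d ∣ Nat.dist (iterDiff k a r) (iterDiff k a (r + 1)) := by
      intro r h1 h2
      have := hblock r h1 h2
      rwa [iterDiff_succ_s4] at this
    by_cases hdvd : d ∣ iterDiff k a p
    · have hall : ∀ j, j ≤ L → d ∣ iterDiff k a (p + j) := by
        intro j
        induction j with
        | zero => intro _; exact hdvd
        | succ m ihm =>
          intro hm
          exact dvd_of_dvd_dist (hdist (p + m) (by omega) (by omega)) (ihm (by omega))
      have := ih (L + 1) (by omega) p (by omega) (fun r h1 h2 => by
        have := hall (r - p) (by omega)
        rwa [Nat.add_sub_cancel' h1] at this)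
      rcases this with ⟨q, hq, hqall⟩ | ⟨i', hi', q, hq, hqall⟩
      · left
        refine ⟨q, by omega, fun r h1 h2 => hqall r h1 (by omega)⟩
      · right
        refine ⟨i', by omega, q, by omega, fun r h1 h2 => hqall r h1 (by omega)⟩
    · have hall : ∀ j, j ≤ L → ¬ d ∣ iterDiff k a (p + j) := by
        intro j
        induction j with
        | zero => intro _; exact hdvd
        | succ m ihm =>
          intro hm hcon
          exact ihm (by omega)
            (dvd_of_dvd_dist' (hdist (p + m) (by omega) (by omega)) hcon)
      right
      refine ⟨k, by omega, p, by omega, fun r h1 h2 => ?_⟩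
      have hne := hall (r - p) (by omega)
      rw [Nat.add_sub_cancel' h1] at hne
      intro h0
      rw [h0] at hne
      exact hne (dvd_zero d)
end

section
/- For any i ≥ 1, there exists a subset J_i ⊆ {1, 2, …, i+1} containing both 1 and i+1, such that for all non-negative integers a_1,…,a_{i+1}, f_i(a_1,…,a_{i+1}) ≡ Σ_{j ∈ J_i} a_j (mod 2). -/
lemma dist_cast_two (x y : ℕ) : ((Nat.dist x y : ℕ) : ZMod 2) = (x : ZMod 2) + y := by
  have h : Nat.dist x y + 2 * min x y = x + y := by
    simp [Nat.dist]; omega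
  have := congrArg (Nat.cast : ℕ → ZMod 2) h
  push_cast at this
  have h2 : (2 : ZMod 2) = 0 := by decide
  rw [h2] at this
  simpa using this

lemma key (n : ℕ) (a : ℕ → ℕ) (r : ℕ) :
    ((iterDiff n a r : ℕ) : ZMod 2)
      = ∑ k ∈ Finset.range (n + 1), (n.choose k : ZMod 2) * a (r + k) := by
  induction n generalizing r with
  | zero => simp [iterDiff]
  | succ n ih =>
    have hstep : iterDiff (n + 1) a r = Nat.dist (iterDiff n a r) (iterDiff n a (r + 1)) := by
      simp [iterDiff, Function.iterate_succ_apply']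
    rw [hstep, dist_cast_two, ih r, ih (r + 1)]
    -- RHS goal: ∑_{k<n+2} C(n+1,k) a(r+k)
    rw [Finset.sum_range_succ' (fun k => ((n+1).choose k : ZMod 2) * a (r + k))]
    have pascal : ∀ k, ((n+1).choose (k+1) : ZMod 2) = n.choose k + n.choose (k+1) := by
      intro k
      rw [Nat.choose_succ_succ]
      push_cast; ring
    have expand : ∑ k ∈ Finset.range (n + 1), ((n+1).choose (k+1) : ZMod 2) * a (r + (k+1))
        = (∑ k ∈ Finset.range (n + 1), (n.choose k : ZMod 2) * a (r + (k+1)))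
          + ∑ k ∈ Finset.range (n + 1), (n.choose (k+1) : ZMod 2) * a (r + (k+1)) := by
      rw [← Finset.sum_add_distrib]
      apply Finset.sum_congr rfl
      intro k _
      rw [pascal k]; ring
    rw [expand]
    have shift : ∑ k ∈ Finset.range (n + 1), (n.choose (k+1) : ZMod 2) * a (r + (k+1))
        = ∑ k ∈ Finset.range (n + 1), (n.choose k : ZMod 2) * a (r + k)
          - (n.choose 0 : ZMod 2) * a (r + 0) := by
      rw [Finset.sum_range_succ' (fun k => (n.choose k : ZMod 2) * a (r + k))]
      have : (n.choose (n+1) : ZMod 2) * a (r + (n+1)) = 0 := by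
        rw [Nat.choose_succ_self]; simp
      rw [Finset.sum_range_succ]
      rw [this]
      ring
    rw [shift]
    have ha : ∀ k, r + 1 + k = r + (k + 1) := by intro k; ring
    simp only [ha]
    simp [Nat.choose_zero_right]
    ring

/-- For any `i ≥ 1`, there is a subset `J ⊆ {1, …, i+1}` containing `1` and `i+1`
such that for all non-negative integers `a_1, …, a_{i+1}` (given as `a 1, …, a (i+1)`),
`f_i(a_1, …, a_{i+1}) ≡ ∑_{j ∈ J} a_j (mod 2)`. -/
theorem stmt5 (i : ℕ) (hi : 1 ≤ i) :
    ∃ J : Finset ℕ, J ⊆ Finset.Icc 1 (i + 1) ∧ 1 ∈ J ∧ (i + 1) ∈ J ∧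
      ∀ a : ℕ → ℕ, iterDiff i a 1 ≡ (∑ j ∈ J, a j) [MOD 2] := by
  refine ⟨(Finset.Icc 1 (i+1)).filter (fun j => Odd (i.choose (j-1))), Finset.filter_subset _ _,
    ?_, ?_, ?_⟩
  · simp only [Finset.mem_filter, Finset.mem_Icc]
    refine ⟨⟨le_refl 1, by omega⟩, by simp⟩
  · simp only [Finset.mem_filter, Finset.mem_Icc]
    refine ⟨⟨by omega, le_refl _⟩, by simp⟩
  · intro a
    rw [← ZMod.natCast_eq_natCast_iff]
    rw [key i a 1]
    push_cast
    have h1 : ∑ k ∈ Finset.range (i + 1), (i.choose k : ZMod 2) * a (1 + k)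
        = ∑ k ∈ (Finset.range (i + 1)).filter (fun k => Odd (i.choose k)), (a (1 + k) : ZMod 2) := by
      rw [Finset.sum_filter]
      apply Finset.sum_congr rfl
      intro k _
      rcases Nat.even_or_odd (i.choose k) with he | ho
      · rw [if_neg (by simpa [Nat.not_odd_iff_even] using he)]
        obtain ⟨m, hm⟩ := he
        rw [hm]; push_cast; ring_nf
        simp [show (2 : ZMod 2) = 0 by decide]
      · rw [if_pos ho]
        obtain ⟨m, hm⟩ := ho
        rw [hm]; push_cast
        simp [show (2 : ZMod 2) = 0 by decide]
    rw [h1]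
    refine Finset.sum_bij' (fun k _ => k + 1) (fun j _ => j - 1) ?_ ?_ ?_ ?_ ?_
    · intro k hk
      simp only [Finset.mem_filter, Finset.mem_range] at hk
      simp only [Finset.mem_filter, Finset.mem_Icc]
      exact ⟨⟨by omega, by omega⟩, by simpa using hk.2⟩
    · intro j hj
      simp only [Finset.mem_filter, Finset.mem_Icc] at hj
      simp only [Finset.mem_filter, Finset.mem_range]
      exact ⟨by omega, hj.2⟩
    · intro k hk; simp
    · intro j hj
      simp only [Finset.mem_filter, Finset.mem_Icc] at hj
      omega
    · intro k hk
      simp [Nat.add_comm]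
end

section
/- For any integer C ≥ 2 and any integer i ≥ (200C²)^{2C}, the number of tuples (a_1,…,a_i) ∈ {0,1,…,C−1}^i with f_{i−1}(a_1,…,a_i) = 0 is at least C^i/(200C²). Equivalently, if a_1,…,a_i are chosen independently and uniformly at random from {0,…,C−1}, the probability that they ultimately iterate to 0 is at least 1/(200C²). -/
/-- Extend a tuple `x ∈ {0,…,C−1}^M` to a sequence `ℕ → ℕ` (by `0` outside). -/
def extend (M C : ℕ) (x : Fin M → Fin C) : ℕ → ℕ :=
  fun n => if h : n < M then (x ⟨n, h⟩ : ℕ) else 0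

namespace Stmt6Aux

open Finset

lemma iterDiff_zero (a : ℕ → ℕ) : iterDiff 0 a = a := rfl

lemma iterDiff_succ (t : ℕ) (a : ℕ → ℕ) (j : ℕ) :
    iterDiff (t + 1) a j = Nat.dist (iterDiff t a j) (iterDiff t a (j + 1)) := by
  unfold iterDiff
  rw [Function.iterate_succ_apply']

lemma iterDiff_succ_inner (t : ℕ) (a : ℕ → ℕ) :
    iterDiff (t + 1) a = iterDiff t (fun n => Nat.dist (a n) (a (n + 1))) := by
  unfold iterDiff
  rw [Function.iterate_succ_apply]

lemma iterDiff_add (s r : ℕ) (a : ℕ → ℕ) :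
    iterDiff (s + r) a = iterDiff s (iterDiff r a) := by
  unfold iterDiff
  rw [Function.iterate_add_apply]

lemma iterDiff_congr : ∀ (t : ℕ) (a b : ℕ → ℕ) (j : ℕ),
    (∀ k, j ≤ k → k ≤ j + t → a k = b k) → iterDiff t a j = iterDiff t b j := by
  intro t
  induction t with
  | zero =>
    intro a b j h
    have := h j le_rfl (by omega)
    simpa [iterDiff] using this
  | succ t ih =>
    intro a b j h
    rw [iterDiff_succ, iterDiff_succ,
      ih a b j (fun k h1 h2 => h k h1 (by omega)),
      ih a b (j + 1) (fun k h1 h2 => h k (by omega) (by omega))]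

lemma dist_dist_one {u v v' : ℕ} (h : Nat.dist v v' = 1) :
    Nat.dist (Nat.dist u v) (Nat.dist u v') = 1 := by
  simp only [Nat.dist] at *
  omega

lemma iterDiff_dist_one : ∀ (t : ℕ) (a b : ℕ → ℕ) (j : ℕ),
    (∀ k, j ≤ k → k < j + t → a k = b k) →
    Nat.dist (a (j + t)) (b (j + t)) = 1 →
    Nat.dist (iterDiff t a j) (iterDiff t b j) = 1 := by
  intro t
  induction t with
  | zero =>
    intro a b j _ h
    simpa [iterDiff] using h
  | succ t ih =>
    intro a b j hagree hd
    rw [iterDiff_succ, iterDiff_succ]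
    have h1 : iterDiff t a j = iterDiff t b j :=
      iterDiff_congr t a b j (fun k hk1 hk2 => hagree k hk1 (by omega))
    have h2 : Nat.dist (iterDiff t a (j + 1)) (iterDiff t b (j + 1)) = 1 := by
      apply ih a b (j + 1) (fun k hk1 hk2 => hagree k (by omega) (by omega))
      have : j + 1 + t = j + (t + 1) := by omega
      rw [this]; exact hd
    rw [h1]
    exact dist_dist_one h2

lemma iterDiff_le (t : ℕ) (a : ℕ → ℕ) (c : ℕ) (h : ∀ k, a k ≤ c) :
    ∀ j, iterDiff t a j ≤ c := by
  induction t with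
  | zero => simpa [iterDiff] using h
  | succ t ih =>
    intro j
    rw [iterDiff_succ]
    have h1 := ih j
    have h2 := ih (j + 1)
    simp only [Nat.dist]
    omega

/-- Block lemma: if after `s` differencing steps the entry at `p` equals `u`, and all
base values on `[p, p+s]` are `≤ u`, then the base values on `[p, p+s]` are all `0` or `u`,
and at least one of them is `u`. -/
lemma blockLemma : ∀ (s : ℕ) (b : ℕ → ℕ) (p u : ℕ),
    (∀ k, p ≤ k → k ≤ p + s → b k ≤ u) → iterDiff s b p = u →
    ((∀ k, p ≤ k → k ≤ p + s → (b k = 0 ∨ b k = u)) ∧ ∃ k₀, p ≤ k₀ ∧ k₀ ≤ p + s ∧ b k₀ = u) := by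
  intro s
  induction s with
  | zero =>
    intro b p u hle htop
    replace htop : b p = u := htop
    constructor
    · intro k hk1 hk2
      have : k = p := by omega
      subst this; right; exact htop
    · exact ⟨p, le_rfl, by omega, htop⟩
  | succ s ih =>
    intro b p u hle htop
    rcases Nat.eq_zero_or_pos u with hu | hu
    · subst hu
      constructor
      · intro k hk1 hk2; left; have := hle k hk1 hk2; omega
      · exact ⟨p, le_rfl, by omega, by have := hle p le_rfl (by omega); omega⟩
    rw [iterDiff_succ_inner] at htop
    set d : ℕ → ℕ := fun n => Nat.dist (b n) (b (n + 1)) with hd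
    have hdle : ∀ k, p ≤ k → k ≤ p + s → d k ≤ u := by
      intro k hk1 hk2
      have h1 := hle k hk1 (by omega)
      have h2 := hle (k + 1) (by omega) (by omega)
      simp only [hd, Nat.dist]; omega
    obtain ⟨hall, k₀, hk₀1, hk₀2, hk₀u⟩ := ih d p u hdle htop
    -- anchor pair
    have hbk₀ : b k₀ ≤ u := hle k₀ hk₀1 (by omega)
    have hbk₀' : b (k₀ + 1) ≤ u := hle (k₀ + 1) (by omega) (by omega)
    have hanchor : (b k₀ = 0 ∧ b (k₀ + 1) = u) ∨ (b k₀ = u ∧ b (k₀ + 1) = 0) := by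
      simp only [hd, Nat.dist] at hk₀u
      omega
    have hup : ∀ m, k₀ + m ≤ p + s + 1 → (b (k₀ + m) = 0 ∨ b (k₀ + m) = u) := by
      intro m
      induction m with
      | zero => intro _; rcases hanchor with ⟨h, _⟩ | ⟨h, _⟩ <;> simp [h]
      | succ m ihm =>
        intro hm
        have hprev := ihm (by omega)
        have hdm : d (k₀ + m) = 0 ∨ d (k₀ + m) = u := hall (k₀ + m) (by omega) (by omega)
        have hb1 : b (k₀ + m + 1) ≤ u := hle (k₀ + m + 1) (by omega) (by omega)
        simp only [hd, Nat.dist] at hdm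
        have : k₀ + (m + 1) = k₀ + m + 1 := by omega
        rw [this]
        omega
    have hdown : ∀ m, m ≤ k₀ - p → (b (k₀ - m) = 0 ∨ b (k₀ - m) = u) := by
      intro m
      induction m with
      | zero => intro _; rcases hanchor with ⟨h, _⟩ | ⟨h, _⟩ <;> simp [h]
      | succ m ihm =>
        intro hm
        have hprev := ihm (by omega)
        have hk : p ≤ k₀ - m - 1 := by omega
        have hdm : d (k₀ - m - 1) = 0 ∨ d (k₀ - m - 1) = u :=
          hall (k₀ - m - 1) hk (by omega)
        have hb1 : b (k₀ - m - 1) ≤ u := hle (k₀ - m - 1) hk (by omega)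
        have heq : k₀ - m - 1 + 1 = k₀ - m := by omega
        simp only [hd, Nat.dist, heq] at hdm
        have : k₀ - (m + 1) = k₀ - m - 1 := by omega
        rw [this]
        omega
    constructor
    · intro k hk1 hk2
      rcases le_or_gt k₀ k with h | h
      · have := hup (k - k₀) (by omega)
        have heq : k₀ + (k - k₀) = k := by omega
        rwa [heq] at this
      · have := hdown (k₀ - k) (by omega)
        have heq : k₀ - (k₀ - k) = k := by omega
        rwa [heq] at this
    · rcases hanchor with ⟨_, h⟩ | ⟨h, _⟩
      · exact ⟨k₀ + 1, by omega, by omega, h⟩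
      · exact ⟨k₀, hk₀1, by omega, h⟩


lemma extend_update_eq (n C : ℕ) (x : Fin n → Fin C) (q : Fin n) (v : Fin C) (k : ℕ)
    (hk : k ≠ (q : ℕ)) :
    extend n C (Function.update x q v) k = extend n C x k := by
  unfold extend
  by_cases hkn : k < n
  · simp only [hkn, dif_pos]
    rw [Function.update_of_ne]
    exact fun h => hk (congrArg Fin.val h)
  · simp [hkn]

lemma extend_update_self (n C : ℕ) (x : Fin n → Fin C) (q : Fin n) (v : Fin C) :
    extend n C (Function.update x q v) (q : ℕ) = (v : ℕ) := by
  unfold extend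
  simp [q.isLt]

/-- Peeling lemma: the number of words such that `L` consecutive entries of row `r`
(starting at position `p`) all lie in a set `S` with no two elements at distance 1
is at most `((C+1)/2)^L * C^(n-L)` (stated multiplied by `C^L`). -/
lemma peel (C n : ℕ) (hC : 1 ≤ C) (S : Finset ℕ)
    (hS : ∀ s₁ ∈ S, ∀ s₂ ∈ S, Nat.dist s₁ s₂ ≠ 1) :
    ∀ (L r p : ℕ), p + L + r ≤ n →
      ((Finset.univ : Finset (Fin n → Fin C)).filter
        (fun x => ∀ j < L, iterDiff r (extend n C x) (p + j) ∈ S)).card * C ^ L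
      ≤ ((C + 1) / 2) ^ L * C ^ n := by
  intro L
  induction L with
  | zero =>
    intro r p _
    simp only [Nat.not_lt_zero, false_implies, implies_true, Finset.filter_true_of_mem,
      Finset.card_univ, pow_zero, mul_one, one_mul]
    rw [Fintype.card_fun]
    simp
  | succ L ih =>
    intro r p hpn
    have hq : p + L + r < n := by omega
    set q : Fin n := ⟨p + L + r, hq⟩ with hqdef
    set z : Fin C := ⟨0, by omega⟩ with hzdef
    set Tsucc := (Finset.univ : Finset (Fin n → Fin C)).filter
        (fun x => ∀ j < L + 1, iterDiff r (extend n C x) (p + j) ∈ S) with hTsucc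
    set T := (Finset.univ : Finset (Fin n → Fin C)).filter
        (fun x => ∀ j < L, iterDiff r (extend n C x) (p + j) ∈ S) with hT
    set T0 := T.filter (fun x => x q = z) with hT0
    -- updating coordinate q does not affect the first L constraints
    have key : ∀ (x : Fin n → Fin C) (v : Fin C) (j : ℕ), j < L →
        iterDiff r (extend n C (Function.update x q v)) (p + j)
          = iterDiff r (extend n C x) (p + j) := by
      intro x v j hj
      apply iterDiff_congr
      intro k hk1 hk2
      apply extend_update_eq
      simp only [hqdef]
      omega
    -- two sequences differing only in coordinate q by consecutive values
    have consec : ∀ (y : Fin n → Fin C) (v w : Fin C), ((w : ℕ) = (v : ℕ) + 1) →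
        iterDiff r (extend n C (Function.update y q v)) (p + L) ∈ S →
        iterDiff r (extend n C (Function.update y q w)) (p + L) ∈ S → False := by
      intro y v w hvw h1 h2
      have hd : Nat.dist (iterDiff r (extend n C (Function.update y q v)) (p + L))
          (iterDiff r (extend n C (Function.update y q w)) (p + L)) = 1 := by
        apply iterDiff_dist_one
        · intro k hk1 hk2
          rw [extend_update_eq n C y q v k (by simp only [hqdef]; omega),
            extend_update_eq n C y q w k (by simp only [hqdef]; omega)]
        · have e1 : extend n C (Function.update y q v) (p + L + r) = (v : ℕ) := by
            have := extend_update_self n C y q v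
            simpa [hqdef] using this
          have e2 : extend n C (Function.update y q w) (p + L + r) = (w : ℕ) := by
            have := extend_update_self n C y q w
            simpa [hqdef] using this
          rw [show p + L + r = p + L + r from rfl] at e1 e2
          rw [e1, e2, hvw]
          simp [Nat.dist]
      exact hS _ h1 _ h2 hd
    -- Step A : card Tsucc ≤ (C+1)/2 * card T0
    have hfib : ∀ y ∈ Tsucc.image (fun x => Function.update x q z),
        (Tsucc.filter (fun x => Function.update x q z = y)).card ≤ (C + 1) / 2 := by
      intro y _
      calc (Tsucc.filter (fun x => Function.update x q z = y)).card
          ≤ (Finset.range ((C + 1) / 2)).card := by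
            apply Finset.card_le_card_of_injOn (fun x => (x q : ℕ) / 2)
            · intro x hx
              simp only [Finset.mem_coe, Finset.mem_range]
              have := (x q).isLt
              omega
            · intro x1 hx1 x2 hx2 hval
              simp only [Finset.coe_filter, Set.mem_setOf_eq] at hx1 hx2
              obtain ⟨hx1m, hx1e⟩ := hx1
              obtain ⟨hx2m, hx2e⟩ := hx2
              have hoff : ∀ k, k ≠ q → x1 k = x2 k := by
                intro k hk
                have := congrFun (hx1e.trans hx2e.symm) k
                rwa [Function.update_of_ne hk, Function.update_of_ne hk] at this
              by_cases hsame : x1 q = x2 q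
              · funext k
                by_cases hk : k = q
                · rw [hk, hsame]
                · exact hoff k hk
              exfalso
              have hlt1 := (x1 q).isLt
              have hlt2 := (x2 q).isLt
              have hne : (x1 q : ℕ) ≠ (x2 q : ℕ) := fun h => hsame (Fin.ext h)
              have hx21 : Function.update x1 q (x2 q) = x2 := by
                funext k
                by_cases hk : k = q
                · rw [hk]; simp
                · rw [Function.update_of_ne hk]; exact hoff k hk
              have hx11 : Function.update x1 q (x1 q) = x1 := Function.update_eq_self _ _
              have hmem1 : iterDiff r (extend n C x1) (p + L) ∈ S :=
                (Finset.mem_filter.mp hx1m).2 L (Nat.lt_succ_self L)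
              have hmem2 : iterDiff r (extend n C x2) (p + L) ∈ S :=
                (Finset.mem_filter.mp hx2m).2 L (Nat.lt_succ_self L)
              have hcases : ((x2 q : ℕ) = (x1 q : ℕ) + 1) ∨ ((x1 q : ℕ) = (x2 q : ℕ) + 1) := by
                simp only at hval
                omega
              rcases hcases with hc | hc
              · exact consec x1 (x1 q) (x2 q) hc (by rwa [hx11]) (by rwa [hx21])
              · exact consec x1 (x2 q) (x1 q) hc (by rwa [hx21]) (by rwa [hx11])
        _ = (C + 1) / 2 := Finset.card_range _
    have stepA : Tsucc.card ≤ ((C + 1) / 2) * T0.card := by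
      calc Tsucc.card
          ≤ ((C + 1) / 2) * (Tsucc.image (fun x => Function.update x q z)).card :=
            Finset.card_le_mul_card_image _ _ hfib
        _ ≤ ((C + 1) / 2) * T0.card := by
            apply Nat.mul_le_mul_left
            apply Finset.card_le_card
            intro y hy
            obtain ⟨x, hx, rfl⟩ := Finset.mem_image.mp hy
            have hxm := (Finset.mem_filter.mp hx).2
            rw [hT0, Finset.mem_filter, hT, Finset.mem_filter]
            refine ⟨⟨Finset.mem_univ _, fun j hj => ?_⟩, Function.update_self _ _ _⟩
            rw [key x z j hj]
            exact hxm j (by omega)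
    -- Step B : card T0 * C = card T
    have stepB : T0.card * C = T.card := by
      have hpart : T.card = ∑ v : Fin C, (T.filter (fun x => x q = v)).card :=
        Finset.card_eq_sum_card_fiberwise (fun x _ => Finset.mem_univ (x q))
      have heach : ∀ v : Fin C, (T.filter (fun x => x q = v)).card = T0.card := by
        intro v
        apply Finset.card_nbij' (fun x => Function.update x q z)
          (fun x => Function.update x q v)
        · intro x hx
          rw [Finset.mem_coe, Finset.mem_filter] at hx
          obtain ⟨hx1, _⟩ := hx
          rw [hT] at hx1
          rw [Finset.mem_filter] at hx1
          rw [hT0, Finset.mem_coe, Finset.mem_filter, hT, Finset.mem_filter]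
          exact ⟨⟨Finset.mem_univ _, fun j hj => by rw [key x z j hj]; exact hx1.2 j hj⟩,
            Function.update_self _ _ _⟩
        · intro x hx
          rw [Finset.mem_coe, Finset.mem_filter] at hx
          obtain ⟨hx1, _⟩ := hx
          rw [hT] at hx1
          rw [Finset.mem_filter] at hx1
          rw [Finset.mem_coe, Finset.mem_filter, hT, Finset.mem_filter]
          exact ⟨⟨Finset.mem_univ _, fun j hj => by rw [key x v j hj]; exact hx1.2 j hj⟩,
            Function.update_self _ _ _⟩
        · intro x hx
          rw [Finset.mem_coe, Finset.mem_filter] at hx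
          dsimp only
          rw [Function.update_idem, ← hx.2, Function.update_eq_self]
        · intro x hx
          rw [Finset.mem_coe, Finset.mem_filter] at hx
          dsimp only
          rw [Function.update_idem, ← hx.2, Function.update_eq_self]
      rw [hpart]
      simp only [heach, Finset.sum_const, Finset.card_univ, Fintype.card_fin, smul_eq_mul]
      ring
    -- combine
    have ihT : T.card * C ^ L ≤ ((C + 1) / 2) ^ L * C ^ n := ih r p (by omega)
    calc Tsucc.card * C ^ (L + 1)
        = (Tsucc.card * C) * C ^ L := by ring
      _ ≤ (((C + 1) / 2) * T0.card * C) * C ^ L := by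
          exact Nat.mul_le_mul_right _ (Nat.mul_le_mul_right _ stepA)
      _ = ((C + 1) / 2) * ((T0.card * C) * C ^ L) := by ring
      _ = ((C + 1) / 2) * (T.card * C ^ L) := by rw [stepB]
      _ ≤ ((C + 1) / 2) * (((C + 1) / 2) ^ L * C ^ n) := Nat.mul_le_mul_left _ ihT
      _ = ((C + 1) / 2) ^ (L + 1) * C ^ n := by ring

lemma extend_le (n C : ℕ) (hC : 1 ≤ C) (x : Fin n → Fin C) :
    ∀ k, extend n C x k ≤ C - 1 := by
  intro k
  unfold extend
  by_cases hk : k < n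
  · simp only [hk, dif_pos]
    have := (x ⟨k, hk⟩).isLt
    omega
  · simp [hk]

lemma cover (C n : ℕ) (hC : 3 ≤ C) (hn : C * C ≤ n) (x : Fin n → Fin C)
    (h2 : 2 ≤ iterDiff (n - 1) (extend n C x) 0) :
    ∃ u r p, 2 ≤ u ∧ u < C ∧ r < n ∧ p < n ∧ p + ((n - 1) / (C - 2)) + r ≤ n ∧
      ∀ j < (n - 1) / (C - 2), iterDiff r (extend n C x) (p + j) ∈ ({0, u} : Finset ℕ) := by
  have hnC : C ≤ n := le_trans (Nat.le_mul_of_pos_left C (by omega)) hn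
  set a := extend n C x with ha
  set L := (n - 1) / (C - 2) with hL
  set M : ℕ → ℕ := fun t => (Finset.range (n - t)).sup (iterDiff t a) with hM
  have hEle : ∀ t j, iterDiff t a j ≤ C - 1 := fun t =>
    iterDiff_le t a (C - 1) (extend_le n C (by omega) x)
  have hMsucc : ∀ t, M (t + 1) ≤ M t := by
    intro t
    apply Finset.sup_le
    intro j hj
    rw [Finset.mem_range] at hj
    rw [iterDiff_succ]
    have h1 : iterDiff t a j ≤ M t :=
      Finset.le_sup (Finset.mem_range.mpr (by omega))
    have h2 : iterDiff t a (j + 1) ≤ M t :=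
      Finset.le_sup (Finset.mem_range.mpr (by omega))
    simp only [Nat.dist]
    omega
  have hManti : Antitone M := antitone_nat_of_succ_le hMsucc
  have hMtop : M (n - 1) = iterDiff (n - 1) a 0 := by
    have h1 : n - (n - 1) = 1 := by omega
    rw [hM]
    simp only [h1, Finset.range_one, Finset.sup_singleton]
  have hM2 : ∀ t, t ≤ n - 1 → 2 ≤ M t := by
    intro t ht
    calc 2 ≤ iterDiff (n - 1) a 0 := h2
      _ = M (n - 1) := hMtop.symm
      _ ≤ M t := hManti ht
  have hM0 : M 0 ≤ C - 1 := Finset.sup_le (fun j _ => hEle 0 j)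
  have hL1 : 1 ≤ L := by
    rw [hL]
    rw [Nat.one_le_div_iff (by omega)]
    omega
  have hLC : (C - 2) * L ≤ n - 1 := by
    rw [hL, mul_comm]
    exact Nat.div_mul_le_self (n - 1) (C - 2)
  -- pigeonhole: some window is constant
  have hpig : ∃ k, k < C - 2 ∧ M (k * L) = M (k * L + (L - 1)) := by
    by_contra hno
    push_neg at hno
    have aux : ∀ k, k ≤ C - 2 → M (k * L) + k ≤ C - 1 := by
      intro k
      induction k with
      | zero => intro _; simpa using hM0
      | succ k ihk =>
        intro hk
        have hne := hno k (by omega)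
        have ha1 : M (k * L + (L - 1)) ≤ M (k * L) := hManti (by omega)
        have ha2 : M ((k + 1) * L) ≤ M (k * L + (L - 1)) := by
          apply hManti
          have : (k + 1) * L = k * L + L := by ring
          omega
        have := ihk (by omega)
        omega
    have h1 := aux (C - 2) le_rfl
    have h2 : 2 ≤ M ((C - 2) * L) := hM2 ((C - 2) * L) (by omega)
    omega
  obtain ⟨k, hk, heq⟩ := hpig
  set r := k * L with hr
  have hrineq : r + L ≤ n - 1 := by
    have : (k + 1) * L ≤ (C - 2) * L := Nat.mul_le_mul_right L (by omega)
    have h1 : (k + 1) * L = r + L := by rw [hr]; ring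
    omega
  set u := M r with hu
  have hu2 : 2 ≤ u := hM2 r (by omega)
  have huC : u ≤ C - 1 := le_trans (hManti (Nat.zero_le r)) hM0
  -- a position attaining the top of the window
  have hnon : (Finset.range (n - (r + (L - 1)))).Nonempty := by
    refine ⟨0, Finset.mem_range.mpr ?_⟩
    omega
  obtain ⟨p, hpmem, hpeq⟩ :=
    Finset.exists_mem_eq_sup (Finset.range (n - (r + (L - 1)))) hnon (iterDiff (r + (L - 1)) a)
  rw [Finset.mem_range] at hpmem
  have htopval : iterDiff (L - 1) (iterDiff r a) p = u := by
    rw [← iterDiff_add]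
    have h1 : L - 1 + r = r + (L - 1) := by omega
    rw [h1]
    rw [← hpeq]
    rw [hu]
    have : M (r + (L - 1)) = M r := heq.symm
    exact this.symm ▸ rfl
  have hble : ∀ kk, p ≤ kk → kk ≤ p + (L - 1) → iterDiff r a kk ≤ u := by
    intro kk hk1 hk2
    have hkk : kk < n - r := by omega
    exact Finset.le_sup (Finset.mem_range.mpr hkk)
  obtain ⟨hall, -⟩ := blockLemma (L - 1) (iterDiff r a) p u hble htopval
  refine ⟨u, r, p, hu2, by omega, by omega, by omega, by omega, ?_⟩
  intro j hj
  have := hall (p + j) (by omega) (by omega)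
  simp only [Finset.mem_insert, Finset.mem_singleton]
  exact this

lemma apex1_bound (C n : ℕ) (hC : 1 ≤ C) (hn : 1 ≤ n) :
    ((Finset.univ : Finset (Fin n → Fin C)).filter
      (fun x => iterDiff (n - 1) (extend n C x) 0 = 1)).card * C
    ≤ ((C + 1) / 2) * C ^ n := by
  have hS : ∀ s₁ ∈ ({1} : Finset ℕ), ∀ s₂ ∈ ({1} : Finset ℕ), Nat.dist s₁ s₂ ≠ 1 := by
    intro s₁ h1 s₂ h2
    simp only [Finset.mem_singleton] at h1 h2
    subst h1; subst h2
    simp [Nat.dist]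
  have hpeel := peel C n hC ({1} : Finset ℕ) hS 1 (n - 1) 0 (by omega)
  refine le_trans ?_ (by simpa using hpeel)
  refine Nat.mul_le_mul_right C (Finset.card_le_card ?_)
  intro x hx
  simp only [Finset.mem_filter] at hx ⊢
  exact hx

lemma apex2_bound (C n : ℕ) (hC : 3 ≤ C) (hn : C * C ≤ n) :
    ((Finset.univ : Finset (Fin n → Fin C)).filter
      (fun x => 2 ≤ iterDiff (n - 1) (extend n C x) 0)).card * C ^ ((n - 1) / (C - 2))
    ≤ (C * (n * n)) * (((C + 1) / 2) ^ ((n - 1) / (C - 2)) * C ^ n) := by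
  classical
  set L := (n - 1) / (C - 2) with hL
  set I : Finset (ℕ × ℕ × ℕ) :=
    ((Finset.range C) ×ˢ (Finset.range n) ×ˢ (Finset.range n)).filter
      (fun z => 2 ≤ z.1 ∧ z.2.2 + L + z.2.1 ≤ n) with hI
  set T : ℕ × ℕ × ℕ → Finset (Fin n → Fin C) := fun z =>
    (Finset.univ : Finset (Fin n → Fin C)).filter
      (fun x => ∀ j < L, iterDiff z.2.1 (extend n C x) (z.2.2 + j) ∈ ({0, z.1} : Finset ℕ)) with hT
  have hsub : ((Finset.univ : Finset (Fin n → Fin C)).filter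
      (fun x => 2 ≤ iterDiff (n - 1) (extend n C x) 0)) ⊆ I.biUnion T := by
    intro x hx
    rw [Finset.mem_filter] at hx
    obtain ⟨u, r, p, hu2, huC, hr, hp, hval, hmem⟩ := cover C n hC hn x hx.2
    rw [Finset.mem_biUnion]
    refine ⟨(u, r, p), ?_, ?_⟩
    · rw [hI, Finset.mem_filter]
      refine ⟨?_, hu2, hval⟩
      simp only [Finset.mem_product, Finset.mem_range]
      exact ⟨huC, hr, hp⟩
    · rw [hT, Finset.mem_filter]
      exact ⟨Finset.mem_univ _, hmem⟩
  have hcardI : I.card ≤ C * (n * n) := by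
    calc I.card ≤ ((Finset.range C) ×ˢ (Finset.range n) ×ˢ (Finset.range n)).card :=
          Finset.card_le_card (Finset.filter_subset _ _)
      _ = C * (n * n) := by
          rw [Finset.card_product, Finset.card_product]
          simp [Finset.card_range]
  have hTbound : ∀ z ∈ I, (T z).card * C ^ L ≤ ((C + 1) / 2) ^ L * C ^ n := by
    intro z hz
    rw [hI, Finset.mem_filter] at hz
    obtain ⟨-, hz2, hzval⟩ := hz
    apply peel C n (by omega) ({0, z.1} : Finset ℕ) ?_ L z.2.1 z.2.2 hzval
    intro s₁ h1 s₂ h2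
    simp only [Finset.mem_insert, Finset.mem_singleton] at h1 h2
    rcases h1 with rfl | rfl <;> rcases h2 with rfl | rfl <;> simp [Nat.dist] <;> omega
  calc ((Finset.univ : Finset (Fin n → Fin C)).filter
      (fun x => 2 ≤ iterDiff (n - 1) (extend n C x) 0)).card * C ^ L
      ≤ (I.biUnion T).card * C ^ L := Nat.mul_le_mul_right _ (Finset.card_le_card hsub)
    _ ≤ (∑ z ∈ I, (T z).card) * C ^ L := Nat.mul_le_mul_right _ (Finset.card_biUnion_le)
    _ = ∑ z ∈ I, ((T z).card * C ^ L) := by rw [Finset.sum_mul]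
    _ ≤ ∑ z ∈ I, (((C + 1) / 2) ^ L * C ^ n) := Finset.sum_le_sum hTbound
    _ = I.card * (((C + 1) / 2) ^ L * C ^ n) := by rw [Finset.sum_const, smul_eq_mul]
    _ ≤ (C * (n * n)) * (((C + 1) / 2) ^ L * C ^ n) := Nat.mul_le_mul_right _ hcardI

lemma numeric (C n : ℕ) (hC : 3 ≤ C) (hn : (200 * C ^ 2) ^ (2 * C) ≤ n) :
    12 * (C * (n * n)) * ((C + 1) / 2) ^ ((n - 1) / (C - 2)) ≤ C ^ ((n - 1) / (C - 2)) := by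
  set L := (n - 1) / (C - 2) with hL
  -- size of n
  have hCC : (200 * C ^ 2) ^ 2 ≤ n := by
    calc (200 * C ^ 2) ^ 2 ≤ (200 * C ^ 2) ^ (2 * C) :=
          Nat.pow_le_pow_right (by positivity) (by omega)
      _ ≤ n := hn
  have hC4 : 40000 * C ^ 4 ≤ n := by
    have : (200 * C ^ 2) ^ 2 = 40000 * C ^ 4 := by ring
    omega
  have hCC2 : C ^ 2 ≤ C ^ 4 := Nat.pow_le_pow_right (by omega) (by omega)
  have hnn : 312 * C ^ 2 ≤ n := by omega
  -- m := n / (4C)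
  set m := n / (4 * C) with hm
  have hA1 : 4 * C * m ≤ n := by
    have h0 := Nat.div_mul_le_self n (4 * C)
    rw [← hm] at h0
    calc 4 * C * m = m * (4 * C) := by ring
      _ ≤ n := h0
  have hA2 : n ≤ 4 * C * m + 4 * C := by
    have h1 := Nat.div_add_mod n (4 * C)
    rw [← hm] at h1
    have h2 : n % (4 * C) < 4 * C := Nat.mod_lt n (by omega)
    omega
  have h78 : 78 * C ≤ m := by
    rw [hm, Nat.le_div_iff_mul_le (by omega : 0 < 4 * C)]
    have : 78 * C * (4 * C) = 312 * C ^ 2 := by ring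
    omega
  have hCm : 156 * C ≤ C * m := by
    have h156 : 156 ≤ m := by omega
    have := Nat.mul_le_mul_left C h156
    omega
  have hA1' : 4 * (C * m) ≤ n := by
    have : 4 * C * m = 4 * (C * m) := by ring
    omega
  have hn8 : n ≤ 8 * (C * m) := by
    have : 4 * C * m = 4 * (C * m) := by ring
    omega
  -- L is large: m + 5 ≤ L
  have hmL : m + 5 ≤ L := by
    have hd1 : (n - 1) / C ≤ L := by
      rw [hL]
      exact Nat.div_le_div_left (by omega) (by omega)
    have hd2 : m + 5 ≤ (n - 1) / C := by
      rw [Nat.le_div_iff_mul_le (by omega : 0 < C)]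
      have hexp : (m + 5) * C = C * m + 5 * C := by ring
      omega
    omega
  have hL6 : 6 ≤ L := by omega
  -- the descending-factorial bound
  have hdesc1 : (L - 5) ^ 6 ≤ L.descFactorial 6 := by
    have hexpand : L.descFactorial 6 = (L - 5) * ((L - 4) * ((L - 3) * ((L - 2) * ((L - 1) * ((L - 0) * 1))))) := by
      simp only [Nat.descFactorial]
    rw [hexpand]
    have hp : (L - 5) ^ 6 = (L - 5) * ((L - 5) * ((L - 5) * ((L - 5) * ((L - 5) * ((L - 5) * 1))))) := by
      ring
    rw [hp]
    gcongr <;> omega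
  -- main polynomial bound : 552960 * (C*n*n) ≤ (L-5)^6
  have hpoly : 552960 * (C * (n * n)) ≤ (L - 5) ^ 6 := by
    have e1 : 552960 * (C * (n * n)) ≤ 552960 * (C * ((8 * (C * m)) * (8 * (C * m)))) := by
      gcongr
    have e2 : 552960 * (C * ((8 * (C * m)) * (8 * (C * m)))) = 35389440 * (C ^ 3) * m ^ 2 := by
      ring
    have hC34 : 35389440 * C ^ 3 ≤ 37015056 * C ^ 4 := by
      have : C ^ 3 ≤ C ^ 4 := Nat.pow_le_pow_right (by omega) (by omega)
      omega
    have e4 : (78 * C) ^ 4 = 37015056 * C ^ 4 := by ring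
    have e5 : (78 * C) ^ 4 ≤ m ^ 4 := Nat.pow_le_pow_left h78 4
    have e6 : 35389440 * (C ^ 3) * m ^ 2 ≤ m ^ 4 * m ^ 2 := by
      apply Nat.mul_le_mul_right
      omega
    have e7 : m ^ 4 * m ^ 2 = m ^ 6 := by ring
    have e8 : m ^ 6 ≤ (L - 5) ^ 6 := Nat.pow_le_pow_left (by omega) 6
    omega
  -- binomial bound : 12 * (C*n*n) * 2^L ≤ 3^L
  have hchoose : 768 * (C * (n * n)) ≤ L.choose 6 := by
    have h1 : 720 * L.choose 6 = L.descFactorial 6 := by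
      rw [Nat.descFactorial_eq_factorial_mul_choose]
      norm_num [Nat.factorial]
    have h2 : 552960 * (C * (n * n)) = 720 * (768 * (C * (n * n))) := by ring
    have h3 : 720 * (768 * (C * (n * n))) ≤ 720 * L.choose 6 := by omega
    exact Nat.le_of_mul_le_mul_left h3 (by omega)
  have hbinom : L.choose 6 * 2 ^ (L - 6) ≤ 3 ^ L := by
    have hadd : (2 + 1 : ℕ) ^ L = ∑ k ∈ Finset.range (L + 1), 2 ^ k * 1 ^ (L - k) * L.choose k :=
      add_pow 2 1 L
    have hmem : L - 6 ∈ Finset.range (L + 1) := Finset.mem_range.mpr (by omega)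
    have hterm := Finset.single_le_sum (f := fun k => 2 ^ k * 1 ^ (L - k) * L.choose k)
      (fun k _ => Nat.zero_le _) hmem
    have hsymm : L.choose (L - 6) = L.choose 6 := Nat.choose_symm hL6
    have : 2 ^ (L - 6) * 1 ^ (L - (L - 6)) * L.choose (L - 6) ≤ 3 ^ L := by
      rw [show (3 : ℕ) = 2 + 1 from rfl, hadd]
      exact hterm
    simpa [hsymm, one_pow, mul_comm] using this
  have hcore : 12 * (C * (n * n)) * 2 ^ L ≤ 3 ^ L := by
    have h2L : (2 : ℕ) ^ L = 64 * 2 ^ (L - 6) := by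
      have hLe : L = 6 + (L - 6) := by omega
      calc (2 : ℕ) ^ L = 2 ^ (6 + (L - 6)) := by rw [← hLe]
        _ = 64 * 2 ^ (L - 6) := by rw [pow_add]; norm_num
    calc 12 * (C * (n * n)) * 2 ^ L = 768 * (C * (n * n)) * 2 ^ (L - 6) := by
          rw [h2L]; ring
      _ ≤ L.choose 6 * 2 ^ (L - 6) := Nat.mul_le_mul_right _ hchoose
      _ ≤ 3 ^ L := hbinom
  -- conclude
  have hb : 3 * ((C + 1) / 2) ≤ 2 * C := by omega
  have hfinal : 3 ^ L * (12 * (C * (n * n)) * ((C + 1) / 2) ^ L) ≤ 3 ^ L * C ^ L := by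
    calc 3 ^ L * (12 * (C * (n * n)) * ((C + 1) / 2) ^ L)
        = 12 * (C * (n * n)) * (3 * ((C + 1) / 2)) ^ L := by
          rw [mul_pow]; ring
      _ ≤ 12 * (C * (n * n)) * (2 * C) ^ L := by
          apply Nat.mul_le_mul_left
          exact Nat.pow_le_pow_left hb L
      _ = (12 * (C * (n * n)) * 2 ^ L) * C ^ L := by
          rw [mul_pow]; ring
      _ ≤ 3 ^ L * C ^ L := Nat.mul_le_mul_right _ hcore
  exact Nat.le_of_mul_le_mul_left hfinal (by positivity)

lemma main_count (C n : ℕ) (hC : 2 ≤ C) (hn : (200 * C ^ 2) ^ (2 * C) ≤ n) :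
    C ^ n ≤ 4 * ((Finset.univ : Finset (Fin n → Fin C)).filter
      (fun x => iterDiff (n - 1) (extend n C x) 0 = 0)).card := by
  classical
  have hCsq : C ^ 2 = C * C := by ring
  have hsq1 : 1 ≤ C ^ 2 := Nat.one_le_pow 2 C (by omega)
  have hbase : C * C ≤ 200 * C ^ 2 := by omega
  have hstep : 200 * C ^ 2 ≤ n := by
    calc 200 * C ^ 2 = (200 * C ^ 2) ^ 1 := by ring
      _ ≤ (200 * C ^ 2) ^ (2 * C) := Nat.pow_le_pow_right (by omega) (by omega)
      _ ≤ n := hn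
  have hnbig : C * C ≤ n := le_trans hbase hstep
  have hn1 : 1 ≤ n := by omega
  -- partition of all words by apex value
  have htotal : C ^ n ≤
      ((Finset.univ : Finset (Fin n → Fin C)).filter
        (fun x => iterDiff (n - 1) (extend n C x) 0 = 0)).card
      + ((Finset.univ : Finset (Fin n → Fin C)).filter
        (fun x => iterDiff (n - 1) (extend n C x) 0 = 1)).card
      + ((Finset.univ : Finset (Fin n → Fin C)).filter
        (fun x => 2 ≤ iterDiff (n - 1) (extend n C x) 0)).card := by
    have hcu : ((Finset.univ : Finset (Fin n → Fin C))).card = C ^ n := by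
      rw [Finset.card_univ, Fintype.card_fun]
      simp
    have hsub : (Finset.univ : Finset (Fin n → Fin C)) ⊆
        (((Finset.univ : Finset (Fin n → Fin C)).filter
          (fun x => iterDiff (n - 1) (extend n C x) 0 = 0))
        ∪ ((Finset.univ : Finset (Fin n → Fin C)).filter
          (fun x => iterDiff (n - 1) (extend n C x) 0 = 1))
        ∪ ((Finset.univ : Finset (Fin n → Fin C)).filter
          (fun x => 2 ≤ iterDiff (n - 1) (extend n C x) 0))) := by
      intro x _
      simp only [Finset.mem_union, Finset.mem_filter, Finset.mem_univ, true_and]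
      omega
    calc C ^ n = (Finset.univ : Finset (Fin n → Fin C)).card := hcu.symm
      _ ≤ _ := Finset.card_le_card hsub
      _ ≤ _ := le_trans (Finset.card_union_le _ _)
            (Nat.add_le_add_right (Finset.card_union_le _ _) _)
  -- bound on apex = 1
  have hA1b : 12 * ((Finset.univ : Finset (Fin n → Fin C)).filter
      (fun x => iterDiff (n - 1) (extend n C x) 0 = 1)).card ≤ 8 * C ^ n := by
    have h := apex1_bound C n (by omega) hn1
    set A1 := ((Finset.univ : Finset (Fin n → Fin C)).filter
      (fun x => iterDiff (n - 1) (extend n C x) 0 = 1)).card with hA1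
    have h32 : 3 * ((C + 1) / 2) ≤ 2 * C := by omega
    have h3 : 3 * (((C + 1) / 2) * C ^ n) ≤ (2 * C) * C ^ n := by
      have h2 := Nat.mul_le_mul_right (C ^ n) h32
      calc 3 * (((C + 1) / 2) * C ^ n) = (3 * ((C + 1) / 2)) * C ^ n := by ring
        _ ≤ (2 * C) * C ^ n := h2
    have h4 : C * (3 * A1) ≤ C * (2 * C ^ n) := by
      have e1 : C * (3 * A1) = 3 * (A1 * C) := by ring
      have e2 : C * (2 * C ^ n) = (2 * C) * C ^ n := by ring
      have e3 : 3 * (A1 * C) ≤ 3 * (((C + 1) / 2) * C ^ n) := by omega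
      omega
    have h5 : 3 * A1 ≤ 2 * C ^ n := Nat.le_of_mul_le_mul_left h4 (by omega)
    omega
  -- bound on apex ≥ 2
  have hA2b : 12 * ((Finset.univ : Finset (Fin n → Fin C)).filter
      (fun x => 2 ≤ iterDiff (n - 1) (extend n C x) 0)).card ≤ C ^ n := by
    rcases lt_or_ge C 3 with hC2 | hC3
    · have hzero : ((Finset.univ : Finset (Fin n → Fin C)).filter
          (fun x => 2 ≤ iterDiff (n - 1) (extend n C x) 0)).card = 0 := by
        rw [Finset.card_eq_zero, Finset.filter_eq_empty_iff]
        intro x _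
        have hle := iterDiff_le (n - 1) (extend n C x) (C - 1)
          (extend_le n C (by omega) x) 0
        omega
      rw [hzero]
      have : 0 < C ^ n := by positivity
      omega
    · set L := (n - 1) / (C - 2) with hLdef
      set A2 := ((Finset.univ : Finset (Fin n → Fin C)).filter
        (fun x => 2 ≤ iterDiff (n - 1) (extend n C x) 0)).card with hA2
      have hub : A2 * C ^ L ≤ (C * (n * n)) * (((C + 1) / 2) ^ L * C ^ n) :=
        apex2_bound C n hC3 hnbig
      have hnum : 12 * (C * (n * n)) * ((C + 1) / 2) ^ L ≤ C ^ L :=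
        numeric C n hC3 hn
      have h1 : 12 * (A2 * C ^ L) ≤ 12 * ((C * (n * n)) * (((C + 1) / 2) ^ L * C ^ n)) := by
        omega
      have h2 : 12 * ((C * (n * n)) * (((C + 1) / 2) ^ L * C ^ n))
          = (12 * (C * (n * n)) * ((C + 1) / 2) ^ L) * C ^ n := by ring
      have h3 : (12 * (C * (n * n)) * ((C + 1) / 2) ^ L) * C ^ n ≤ C ^ L * C ^ n :=
        Nat.mul_le_mul_right _ hnum
      have h4 : 12 * (A2 * C ^ L) = C ^ L * (12 * A2) := by ring
      have h5 : C ^ L * (12 * A2) ≤ C ^ L * C ^ n := by omega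
      exact Nat.le_of_mul_le_mul_left h5 (by positivity)
  omega

end Stmt6Aux

/-- For any `C ≥ 2` and `i ≥ (200C²)^{2C}`, the number of tuples
`(a_1,…,a_i) ∈ {0,…,C−1}^i` with `f_{i−1}(a_1,…,a_i) = 0` is at least
`C^i / (200C²)`. -/
theorem stmt6 (C : ℕ) (hC : 2 ≤ C) (i : ℕ) (hi : (200 * C ^ 2) ^ (2 * C) ≤ i) :
    ((C : ℝ) ^ i / (200 * (C : ℝ) ^ 2)) ≤
      (Nat.card {x : Fin i → Fin C // iterDiff (i - 1) (extend i C x) 0 = 0} : ℝ) := by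
  classical
  have hmain := Stmt6Aux.main_count C i hC hi
  have hcard : Nat.card {x : Fin i → Fin C // iterDiff (i - 1) (extend i C x) 0 = 0}
      = ((Finset.univ : Finset (Fin i → Fin C)).filter
        (fun x => iterDiff (i - 1) (extend i C x) 0 = 0)).card := by
    rw [Nat.card_eq_fintype_card, Fintype.card_subtype]
  rw [hcard]
  set Z := ((Finset.univ : Finset (Fin i → Fin C)).filter
    (fun x => iterDiff (i - 1) (extend i C x) 0 = 0)).card with hZ
  have hcast : (C : ℝ) ^ i ≤ 4 * (Z : ℝ) := by
    have := hmain
    exact_mod_cast this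
  have hCR : (2 : ℝ) ≤ (C : ℝ) := by exact_mod_cast hC
  have hCpos : (0 : ℝ) < 200 * (C : ℝ) ^ 2 := by nlinarith
  rw [div_le_iff₀ hCpos]
  have hZnn : (0 : ℝ) ≤ (Z : ℝ) := Nat.cast_nonneg Z
  have h4 : (4 : ℝ) ≤ 200 * (C : ℝ) ^ 2 := by nlinarith
  nlinarith [mul_nonneg hZnn (sub_nonneg.mpr h4)]
end

section
/- There exists M₀ such that for all M ≥ M₀ the following holds. Let C be a positive integer with C ≤ log log M, and let I_1,…,I_r ⊆ {1,…,M} be pairwise disjoint intervals with r ≤ C and |I_t| ≤ C·e^{(log M)^{1/5}} for each t. Then there exist pairwise disjoint intervals J_1,…,J_s ⊆ {1,…,M}, each containing at least one of the I_t, such that: (i) for every t with 1 ≤ t ≤ r there is some m with I_t ⊆ J_m; and (ii) for every m with 1 ≤ m ≤ s, letting B_m denote the smallest interval containing all of the I_t that are contained in J_m, either L(B_m) − L(J_m) ≥ ((log M)²)^C·|B_m| or R(J_m) − R(B_m) ≥ ((log M)²)^C·|B_m|, and both inequalities hold if J_m contains neither 1 nor M. -/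
private lemma aux_cover {r : ℕ} (I : Fin r → ℕ × ℕ) (Tj : ℕ) (Rel : Fin r → Fin r → Prop)
    (hRel : ∀ a b, Rel a b →
      ((I a).2 < (I b).1 ∧ (I b).1 ≤ (I a).2 + Tj) ∨
      ((I b).2 < (I a).1 ∧ (I a).1 ≤ (I b).2 + Tj))
    (hlr : ∀ t, (I t).1 ≤ (I t).2)
    (x : ℕ) (t₀ : Fin r) (hx : (I t₀).1 ≤ x) (w : Fin r)
    (hw : Relation.ReflTransGen Rel t₀ w) (hxw : x ≤ (I w).2) :
    ∃ a, Relation.ReflTransGen Rel t₀ a ∧ (I a).1 ≤ x ∧ x ≤ (I a).2 + Tj := by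
  suffices h : ∃ a, Relation.ReflTransGen Rel t₀ a ∧ (I a).1 ≤ x ∧
      (x ≤ (I a).2 + Tj ∨ (I w).2 < x) by
    obtain ⟨a, ha1, ha2, ha3⟩ := h
    rcases ha3 with h' | h'
    · exact ⟨a, ha1, ha2, h'⟩
    · omega
  clear hxw
  induction hw with
  | refl => exact ⟨t₀, Relation.ReflTransGen.refl, hx, by omega⟩
  | @tail b c hab hrel ih =>
      obtain ⟨a, ha1, ha2, ha3⟩ := ih
      by_cases hlc : (I c).1 ≤ x
      · by_cases hrc : x ≤ (I c).2 + Tj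
        · exact ⟨c, hab.tail hrel, hlc, Or.inl hrc⟩
        · exact ⟨a, ha1, ha2, Or.inr (by omega)⟩
      · rcases ha3 with h' | h'
        · exact ⟨a, ha1, ha2, Or.inl h'⟩
        · have hb := hlr b
          have hc := hlr c
          rcases hRel _ _ hrel with ⟨h1, h2⟩ | ⟨h1, h2⟩
          · exact ⟨b, hab, by omega, Or.inl (by omega)⟩
          · omega

set_option maxHeartbeats 1000000 in
/-- Intervals in `{1,…,M}` are represented by pairs `(L(I), R(I))` of endpoints with
`1 ≤ L(I) ≤ R(I) ≤ M`, standing for `{L(I), …, R(I)}`; the cardinality of such an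
interval is `R(I) − L(I) + 1`.

For `M` large: let `C ≥ 1` with `C ≤ log log M`, and let `I_1,…,I_r ⊆ {1,…,M}` be
pairwise disjoint intervals with `r ≤ C` and `|I_t| ≤ C·e^{(log M)^{1/5}}`.  Then
there are pairwise disjoint intervals `J_1,…,J_s ⊆ {1,…,M}`, each containing some
`I_t`, such that every `I_t` is contained in some `J_m`, and for each `m`, writing
`B_m` for the smallest interval containing all the `I_t` contained in `J_m` (its
endpoints are characterised by `IsLeast`/`IsGreatest` below), either
`L(B_m) − L(J_m) ≥ ((log M)²)^C·|B_m|` or `R(J_m) − R(B_m) ≥ ((log M)²)^C·|B_m|`,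
with both holding if `J_m` contains neither `1` nor `M`. -/
theorem stmt9 :
    ∃ M₀ : ℕ, ∀ M : ℕ, M₀ ≤ M →
      ∀ C : ℕ, 1 ≤ C → (C : ℝ) ≤ Real.log (Real.log M) →
      ∀ r : ℕ, r ≤ C → ∀ I : Fin r → ℕ × ℕ,
      (∀ t, 1 ≤ (I t).1 ∧ (I t).1 ≤ (I t).2 ∧ (I t).2 ≤ M) →
      (∀ t t', t ≠ t' → (I t).2 < (I t').1 ∨ (I t').2 < (I t).1) →
      (∀ t, ((I t).2 : ℝ) - (I t).1 + 1 ≤ (C : ℝ) * Real.exp ((Real.log M) ^ ((1 : ℝ) / 5))) →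
      ∃ s : ℕ, ∃ J : Fin s → ℕ × ℕ,
        (∀ m, 1 ≤ (J m).1 ∧ (J m).1 ≤ (J m).2 ∧ (J m).2 ≤ M) ∧
        (∀ m m', m ≠ m' → (J m).2 < (J m').1 ∨ (J m').2 < (J m).1) ∧
        (∀ m, ∃ t, (J m).1 ≤ (I t).1 ∧ (I t).2 ≤ (J m).2) ∧
        (∀ t, ∃ m, (J m).1 ≤ (I t).1 ∧ (I t).2 ≤ (J m).2) ∧
        (∀ m, ∀ lB rB : ℕ,
          IsLeast {x | ∃ t, ((J m).1 ≤ (I t).1 ∧ (I t).2 ≤ (J m).2) ∧ (I t).1 = x} lB →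
          IsGreatest {x | ∃ t, ((J m).1 ≤ (I t).1 ∧ (I t).2 ≤ (J m).2) ∧ (I t).2 = x} rB →
          ((((Real.log M) ^ 2) ^ C * ((rB : ℝ) - lB + 1) ≤ (lB : ℝ) - (J m).1 ∨
            ((Real.log M) ^ 2) ^ C * ((rB : ℝ) - lB + 1) ≤ ((J m).2 : ℝ) - rB) ∧
          ((J m).1 ≠ 1 ∧ (J m).2 ≠ M →
            ((Real.log M) ^ 2) ^ C * ((rB : ℝ) - lB + 1) ≤ (lB : ℝ) - (J m).1 ∧
            ((Real.log M) ^ 2) ^ C * ((rB : ℝ) - lB + 1) ≤ ((J m).2 : ℝ) - rB))) := by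
  classical
  refine ⟨⌈Real.exp ((10:ℝ)^9)⌉₊, ?_⟩
  intro M hM C hC1 hCc r hrC I hIval hIdisj hIsize
  -- basic real facts
  have hMR : Real.exp ((10:ℝ)^9) ≤ (M:ℝ) := by
    calc Real.exp ((10:ℝ)^9) ≤ (⌈Real.exp ((10:ℝ)^9)⌉₊ : ℝ) := Nat.le_ceil _
    _ ≤ (M:ℝ) := by exact_mod_cast hM
  have hM0R : (0:ℝ) < M := lt_of_lt_of_le (Real.exp_pos _) hMR
  set L := Real.log M with hLdef
  have hL9 : (10:ℝ)^9 ≤ L := by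
    rw [hLdef, ← Real.log_exp ((10:ℝ)^9)]
    exact Real.log_le_log (Real.exp_pos _) hMR
  have hL1 : (1:ℝ) ≤ L := by norm_num at hL9 ⊢; linarith
  have hL0 : (0:ℝ) < L := by linarith
  set c := Real.log L with hcdef
  have hexp14 : Real.exp 14 ≤ (10:ℝ)^9 := by
    have h1 := Real.exp_one_lt_d9
    have h2 : Real.exp 14 = (Real.exp 1)^(14:ℕ) := by
      rw [← Real.exp_nat_mul]; norm_num
    rw [h2]
    calc (Real.exp 1)^(14:ℕ) ≤ (2.7182818286:ℝ)^(14:ℕ) :=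
          pow_le_pow_left₀ (Real.exp_pos 1).le h1.le 14
    _ ≤ (10:ℝ)^9 := by norm_num
  have hc14 : (14:ℝ) ≤ c := by
    rw [hcdef, ← Real.log_exp (14:ℝ)]
    exact Real.log_le_log (Real.exp_pos _) (le_trans hexp14 hL9)
  have hcC : (C:ℝ) ≤ c := hCc
  have hC1R : (1:ℝ) ≤ C := by exact_mod_cast hC1
  -- nat constants
  set u := L ^ ((1:ℝ)/5) with hudef
  have hu0 : 0 ≤ u := Real.rpow_nonneg hL0.le _
  set Sn := ⌈(C:ℝ) * Real.exp u⌉₊ with hSndef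
  set Kn := ⌈L^2⌉₊ with hKndef
  set K' := Kn ^ C with hK'def
  have hSn1 : 1 ≤ Sn := by
    rw [hSndef]
    exact Nat.one_le_iff_ne_zero.mpr (by positivity)
  have hKn1 : 1 ≤ Kn := by
    rw [hKndef]
    exact Nat.one_le_iff_ne_zero.mpr (by positivity)
  have hK'1 : 1 ≤ K' := Nat.one_le_pow _ _ hKn1
  set BB := 10 * K' * C with hBBdef
  have hBB10 : 10 ≤ BB := by
    calc 10 = 10 * 1 * 1 := by norm_num
    _ ≤ 10 * K' * C := by
          exact Nat.mul_le_mul (Nat.mul_le_mul le_rfl hK'1) hC1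
  set T : ℕ → ℕ := fun n => BB^(n+1) * Sn with hTdef
  have hTmono : ∀ {n m : ℕ}, n ≤ m → T n ≤ T m := by
    intro n m h
    exact Nat.mul_le_mul_right _ (Nat.pow_le_pow_right (by omega) (by omega))
  have hT1 : ∀ n, 1 ≤ T n := by
    intro n
    have h1 : 1 ≤ BB^(n+1) := Nat.one_le_pow _ _ (by omega)
    calc 1 = 1 * 1 := rfl
    _ ≤ BB^(n+1) * Sn := Nat.mul_le_mul h1 hSn1
  have hSnT : ∀ n, Sn ≤ T n := by
    intro n
    calc Sn = 1 * Sn := (Nat.one_mul _).symm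
    _ ≤ BB^(n+1) * Sn := Nat.mul_le_mul (Nat.one_le_pow _ _ (by omega)) le_rfl
  -- nat size bound
  have hsize : ∀ t, (I t).2 + 1 ≤ (I t).1 + Sn := by
    intro t
    have h := hIsize t
    have h2 : (C:ℝ) * Real.exp u ≤ (Sn:ℝ) := Nat.le_ceil _
    have : ((I t).2 : ℝ) + 1 ≤ ((I t).1 : ℝ) + (Sn:ℝ) := by
      linarith
    exact_mod_cast this
  -- the global numeric bound
  have hcexp : c ≤ 20 * L ^ ((1:ℝ)/20) := by
    have := Real.log_le_rpow_div hL0.le (show (0:ℝ) < 1/20 by norm_num)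
    rw [hcdef]
    linarith
  have hc4 : c^4 ≤ 160000 * u := by
    have h1 : c^4 ≤ (20 * L ^ ((1:ℝ)/20))^4 := by
      apply pow_le_pow_left₀ _ hcexp
      linarith
    have h2 : (L ^ ((1:ℝ)/20))^(4:ℕ) = u := by
      rw [hudef, ← Real.rpow_natCast (L ^ ((1:ℝ)/20)) 4, ← Real.rpow_mul hL0.le]
      norm_num
    calc c^4 ≤ (20 * L ^ ((1:ℝ)/20))^4 := h1
    _ = 160000 * (L ^ ((1:ℝ)/20))^(4:ℕ) := by ring
    _ = 160000 * u := by rw [h2]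
  have hLc : L = Real.exp c := (Real.exp_log hL0).symm
  have hKnR : (Kn:ℝ) ≤ Real.exp (1 + 2*c) := by
    have h0 : (Kn:ℝ) < L^2 + 1 := by
      rw [hKndef]; exact Nat.ceil_lt_add_one (by positivity)
    have h1 : L^2 + 1 ≤ 2 * L^2 := by nlinarith
    have h2 : (2:ℝ) * L^2 ≤ Real.exp (1 + 2*c) := by
      rw [Real.exp_add]
      have e1 : (2:ℝ) ≤ Real.exp 1 := by
        have := Real.exp_one_gt_d9; linarith
      have e2 : L^2 = Real.exp (2*c) := by
        rw [hLc, ← Real.exp_nat_mul]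
        norm_num
      rw [e2]
      exact mul_le_mul_of_nonneg_right e1 (Real.exp_pos _).le
    linarith
  have hK'R : (K':ℝ) ≤ Real.exp (3*c^2) := by
    have h1 : (K':ℝ) = (Kn:ℝ)^C := by rw [hK'def]; push_cast; ring
    rw [h1]
    calc (Kn:ℝ)^C ≤ (Real.exp (1 + 2*c))^C :=
          pow_le_pow_left₀ (Nat.cast_nonneg _) hKnR C
    _ = Real.exp (C * (1 + 2*c)) := by rw [← Real.exp_nat_mul]
    _ ≤ Real.exp (3*c^2) := by
          apply Real.exp_le_exp.mpr
          nlinarith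
  have hSnR : (Sn:ℝ) ≤ Real.exp (2*c + u) := by
    have h0 : (Sn:ℝ) < (C:ℝ) * Real.exp u + 1 := by
      rw [hSndef]; exact Nat.ceil_lt_add_one (by positivity)
    have h1 : (C:ℝ) * Real.exp u + 1 ≤ (c + 1) * Real.exp u := by
      have := Real.one_le_exp hu0
      nlinarith
    have h2 : c + 1 ≤ Real.exp (2*c) := by
      calc c + 1 ≤ 2*c + 1 := by linarith
      _ ≤ Real.exp (2*c) := by
            have := Real.add_one_le_exp (2*c); linarith
    calc (Sn:ℝ) ≤ (c+1) * Real.exp u := by linarith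
    _ ≤ Real.exp (2*c) * Real.exp u := by
          apply mul_le_mul_of_nonneg_right h2 (Real.exp_pos _).le
    _ = Real.exp (2*c + u) := (Real.exp_add _ _).symm
  have hBBR : ((BB:ℕ):ℝ) ≤ Real.exp (4*c^2) := by
    have h10 : (10:ℝ) ≤ Real.exp 3 := by
      have h1 := Real.exp_one_gt_d9
      have h2 : Real.exp 3 = (Real.exp 1)^(3:ℕ) := by
        rw [← Real.exp_nat_mul]; norm_num
      rw [h2]
      calc (10:ℝ) ≤ (2.7:ℝ)^(3:ℕ) := by norm_num
      _ ≤ (Real.exp 1)^(3:ℕ) := by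
            apply pow_le_pow_left₀ (by norm_num) (by linarith)
    have hcec : (C:ℝ) ≤ Real.exp c := by
      calc (C:ℝ) ≤ c := hcC
      _ ≤ Real.exp c := (Real.add_one_le_exp c).trans' (by linarith)
    have : ((BB:ℕ):ℝ) = 10 * (K':ℝ) * (C:ℝ) := by rw [hBBdef]; push_cast; ring
    rw [this]
    calc (10:ℝ) * (K':ℝ) * (C:ℝ) ≤ Real.exp 3 * Real.exp (3*c^2) * Real.exp c := by
          apply mul_le_mul (mul_le_mul h10 hK'R (Nat.cast_nonneg _) (Real.exp_pos _).le) hcec (Nat.cast_nonneg _)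
          positivity
    _ = Real.exp (3 + 3*c^2 + c) := by rw [← Real.exp_add 3 (3*c^2), ← Real.exp_add (3+3*c^2) c]
    _ ≤ Real.exp (4*c^2) := by
          apply Real.exp_le_exp.mpr
          nlinarith
  have hQM : BB^(C^2+2) * Sn ≤ M := by
    have hv : (3:ℝ) * 10^6 ≤ L ^ ((4:ℝ)/5) := by
      have hv0 : (0:ℝ) ≤ L ^ ((4:ℝ)/5) := Real.rpow_nonneg hL0.le _
      have h5 : (L ^ ((4:ℝ)/5))^(5:ℕ) = L^(4:ℕ) := by
        rw [← Real.rpow_natCast (L ^ ((4:ℝ)/5)) 5, ← Real.rpow_mul hL0.le,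
            ← Real.rpow_natCast L 4]
        norm_num
      have h6 : ((3:ℝ) * 10^6)^(5:ℕ) ≤ (L ^ ((4:ℝ)/5))^(5:ℕ) := by
        rw [h5]
        calc ((3:ℝ) * 10^6)^(5:ℕ) ≤ ((10:ℝ)^9)^(4:ℕ) := by norm_num
        _ ≤ L^(4:ℕ) := by
              apply pow_le_pow_left₀ (by positivity) hL9
      exact le_of_pow_le_pow_left₀ (by norm_num) hv0 h6
    have huv : u * L ^ ((4:ℝ)/5) = L := by
      rw [hudef, ← Real.rpow_add hL0]
      norm_num
    have hexpo : 4*c^2 * ((C:ℝ)^2 + 2) + (2*c + u) ≤ L := by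
      have hCc2 : (C:ℝ)^2 + 2 ≤ c^2 + 2 := by nlinarith
      have hcc2 : c^2 ≤ c^4 := pow_le_pow_right₀ (by linarith) (by norm_num)
      have hcc1 : c ≤ c^4 := by
        calc c = c^1 := (pow_one c).symm
        _ ≤ c^4 := pow_le_pow_right₀ (by linarith) (by norm_num)
      have h1 : 4*c^2 * ((C:ℝ)^2 + 2) + (2*c + u) ≤ 14 * c^4 + u := by
        nlinarith [mul_le_mul_of_nonneg_left hCc2 (show (0:ℝ) ≤ 4*c^2 by positivity)]
      have h2 : (14:ℝ) * c^4 + u ≤ 14 * (160000 * u) + u := by nlinarith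
      have h3 : (14:ℝ) * (160000 * u) + u ≤ 3 * 10^6 * u := by nlinarith
      have h4 : (3:ℝ) * 10^6 * u ≤ L ^ ((4:ℝ)/5) * u := by
        apply mul_le_mul_of_nonneg_right hv hu0
      rw [mul_comm] at huv
      linarith
    have hcast : ((BB^(C^2+2) * Sn : ℕ) : ℝ) ≤ (M:ℝ) := by
      push_cast
      calc ((BB:ℕ):ℝ)^(C^2+2) * (Sn:ℝ)
          ≤ (Real.exp (4*c^2))^(C^2+2) * Real.exp (2*c + u) := by
            apply mul_le_mul (pow_le_pow_left₀ (Nat.cast_nonneg _) hBBR _) hSnR (Nat.cast_nonneg _)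
            positivity
      _ = Real.exp (4*c^2 * ((C^2+2:ℕ):ℝ) + (2*c + u)) := by
            rw [← Real.exp_nat_mul, ← Real.exp_add, mul_comm ((C^2+2:ℕ):ℝ)]
      _ ≤ Real.exp L := by
            apply Real.exp_le_exp.mpr
            have : ((C^2+2:ℕ):ℝ) = (C:ℝ)^2 + 2 := by push_cast; ring
            rw [this]
            exact hexpo
      _ = M := by rw [hLdef, Real.exp_log hM0R]
    exact_mod_cast hcast
  -- trivial case r = 0
  rcases Nat.eq_zero_or_pos r with rfl | hr0
  · exact ⟨0, Fin.elim0, fun m => m.elim0, fun m => m.elim0, fun m => m.elim0,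
      fun t => t.elim0, fun m => m.elim0⟩
  have t0 : Fin r := ⟨0, hr0⟩
  -- pigeonhole: choose scale j
  have hpig : ∃ j, j ≤ C^2 ∧ ∀ a b : Fin r,
      ¬((I a).2 + T j < (I b).1 ∧ (I b).1 ≤ (I a).2 + T (j+1)) := by
    set Ann : ℕ → Prop := fun n => ∃ p : Fin r × Fin r,
      (I p.1).2 + T n < (I p.2).1 ∧ (I p.2).1 ≤ (I p.1).2 + T (n+1) with hAnn
    set A := (Finset.range (C^2+1)).filter Ann with hA
    have hAcard : A.card ≤ C^2 := by
      set f : ℕ → Fin r × Fin r := fun n => if h : Ann n then h.choose else (t0, t0) with hf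
      have hmaps : ∀ n ∈ A, f n ∈ (Finset.univ : Finset (Fin r × Fin r)) :=
        fun n _ => Finset.mem_univ _
      have hinj : Set.InjOn f ↑A := by
        intro n hn m hm hfnm
        by_contra hne
        have hAnn_n : Ann n := (Finset.mem_filter.mp hn).2
        have hAnn_m : Ann m := (Finset.mem_filter.mp hm).2
        have hfn : f n = hAnn_n.choose := by rw [hf]; exact dif_pos hAnn_n
        have hfm : f m = hAnn_m.choose := by rw [hf]; exact dif_pos hAnn_m
        have hpe : hAnn_n.choose = hAnn_m.choose := by rw [← hfn, ← hfm, hfnm]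
        have sn := hAnn_n.choose_spec
        have sm := hAnn_m.choose_spec
        rw [hpe] at sn
        rcases Nat.lt_or_ge n m with h | h
        · have := hTmono (show n+1 ≤ m by omega)
          omega
        · have hlt : m < n := by omega
          have := hTmono (show m+1 ≤ n by omega)
          omega
      have h1 : A.card ≤ (Finset.univ : Finset (Fin r × Fin r)).card :=
        Finset.card_le_card_of_injOn f hmaps hinj
      have h2 : (Finset.univ : Finset (Fin r × Fin r)).card = r * r := by
        simp [Finset.card_univ]
      have h3 : r * r ≤ C^2 := by
        rw [pow_two]; exact Nat.mul_le_mul hrC hrC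
      omega
    have hnsub : ¬ (Finset.range (C^2+1) ⊆ A) := by
      intro hsub
      have := Finset.card_le_card hsub
      rw [Finset.card_range] at this
      omega
    obtain ⟨j, hjmem, hjA⟩ := Finset.not_subset.mp hnsub
    refine ⟨j, by simpa using Nat.lt_succ_iff.mp (Finset.mem_range.mp hjmem), ?_⟩
    intro a b hab
    exact hjA (Finset.mem_filter.mpr ⟨hjmem, ⟨(a,b), hab⟩⟩)
  obtain ⟨j, hjC2, hjgood⟩ := hpig
  -- the relation and its equivalence closure
  set Rel : Fin r → Fin r → Prop := fun a b =>
    ((I a).2 < (I b).1 ∧ (I b).1 ≤ (I a).2 + T j) ∨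
    ((I b).2 < (I a).1 ∧ (I a).1 ≤ (I b).2 + T j) with hRelDef
  set E : Fin r → Fin r → Prop := Relation.ReflTransGen Rel with hEDef
  have hRelSymm : Symmetric Rel := by
    intro a b h
    rw [hRelDef] at h ⊢
    tauto
  have hEsymm : ∀ {a b}, E a b → E b a := by
    intro a b h
    haveI : Std.Symm Rel := ⟨fun _ _ hh => hRelSymm hh⟩
    exact Std.Symm.symm _ _ h
  have hErefl : ∀ a, E a a := fun a => Relation.ReflTransGen.refl
  have hEtrans : ∀ {a b d}, E a b → E b d → E a d :=
    fun h1 h2 => Relation.ReflTransGen.trans h1 h2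
  have hlr : ∀ t, (I t).1 ≤ (I t).2 := fun t => (hIval t).2.1
  -- classes
  set classOf : Fin r → Finset (Fin r) :=
    fun t =>  Finset.univ.filter (fun t' => E t t') with hclassDef
  have hmemcl : ∀ {a t : Fin r}, t ∈ classOf a ↔ E a t := by
    intro a t
    rw [hclassDef]
    simp
  have hclNe : ∀ a, (classOf a).Nonempty := fun a => ⟨a, hmemcl.mpr (hErefl a)⟩
  set rB : Fin r → ℕ := fun a => (classOf a).sup' (hclNe a) (fun t => (I t).2) with hrBDef
  have hrBub : ∀ a t, E a t → (I t).2 ≤ rB a := by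
    intro a t h
    exact Finset.le_sup' (fun t => (I t).2) (hmemcl.mpr h)
  have hrBmem : ∀ a, ∃ w, E a w ∧ rB a = (I w).2 := by
    intro a
    obtain ⟨w, hw1, hw2⟩ := Finset.exists_mem_eq_sup' (hclNe a) (fun t => (I t).2)
    exact ⟨w, hmemcl.mp hw1, hw2⟩
  have hrBM : ∀ a, rB a ≤ M := by
    intro a
    obtain ⟨w, _, hw⟩ := hrBmem a
    rw [hw]; exact (hIval w).2.2
  have hlrB : ∀ a, (I a).1 ≤ rB a := fun a => le_trans (hlr a) (hrBub a a (hErefl a))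
  -- left endpoints are distinct
  have hlinj : ∀ a b : Fin r, (I a).1 = (I b).1 → a = b := by
    intro a b hab
    by_contra hne
    have h1 := hlr a
    have h2 := hlr b
    rcases hIdisj a b hne with h | h <;> omega
  -- representatives: minimal left endpoint in each class
  set reps : Finset (Fin r) :=
    Finset.univ.filter (fun t => ∀ t', E t t' → (I t).1 ≤ (I t').1) with hrepsDef
  have hrepmin : ∀ a ∈ reps, ∀ t, E a t → (I a).1 ≤ (I t).1 := by
    intro a ha
    exact (Finset.mem_filter.mp ha).2
  have hrep_ex : ∀ t, ∃ a ∈ reps, E a t := by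
    intro t
    obtain ⟨a, ha1, ha2⟩ := Finset.exists_min_image (classOf t) (fun t' => (I t').1) (hclNe t)
    have hEta : E t a := hmemcl.mp ha1
    refine ⟨a, ?_, hEsymm hEta⟩
    rw [hrepsDef]
    refine Finset.mem_filter.mpr ⟨Finset.mem_univ _, ?_⟩
    intro t' ht'
    exact ha2 t' (hmemcl.mpr (hEtrans hEta ht'))
  have hRel_fwd : ∀ a b, Rel a b →
      ((I a).2 < (I b).1 ∧ (I b).1 ≤ (I a).2 + T j) ∨
      ((I b).2 < (I a).1 ∧ (I a).1 ≤ (I b).2 + T j) := by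
    intro a b h
    rwa [hRelDef] at h
  -- hull bound for the class of a representative
  set W := C * (Sn + T j) with hWDef
  have hhull : ∀ a ∈ reps, rB a + 1 ≤ (I a).1 + W := by
    intro a ha
    have hsub : Finset.Icc (I a).1 (rB a) ⊆
        (classOf a).biUnion (fun t => Finset.Icc (I t).1 ((I t).2 + T j)) := by
      intro x hx
      rw [Finset.mem_Icc] at hx
      obtain ⟨w, hw1, hw2⟩ := hrBmem a
      obtain ⟨b, hb1, hb2, hb3⟩ := aux_cover I (T j) Rel hRel_fwd hlr x a hx.1 w hw1 (by omega)
      exact Finset.mem_biUnion.mpr ⟨b, hmemcl.mpr hb1, Finset.mem_Icc.mpr ⟨hb2, hb3⟩⟩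
    have hcard1 : (Finset.Icc (I a).1 (rB a)).card = rB a + 1 - (I a).1 := Nat.card_Icc _ _
    have hcard2 : ((classOf a).biUnion (fun t => Finset.Icc (I t).1 ((I t).2 + T j))).card
        ≤ W := by
      calc ((classOf a).biUnion (fun t => Finset.Icc (I t).1 ((I t).2 + T j))).card
          ≤ ∑ t ∈ classOf a, (Finset.Icc (I t).1 ((I t).2 + T j)).card :=
            Finset.card_biUnion_le
      _ ≤ (classOf a).card * (Sn + T j) := by
            rw [← smul_eq_mul]
            apply Finset.sum_le_card_nsmul
            intro t _
            rw [Nat.card_Icc]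
            have := hsize t
            have := hlr t
            omega
      _ ≤ C * (Sn + T j) := by
            apply Nat.mul_le_mul_right
            calc (classOf a).card ≤ (Finset.univ : Finset (Fin r)).card :=
                  Finset.card_le_card (Finset.subset_univ _)
            _ = r := by simp
            _ ≤ C := hrC
    have := Finset.card_le_card hsub
    have hlrBa := hlrB a
    omega
  set P := K' * W with hPDef
  have hWP : W ≤ P := by
    calc W = 1 * W := (Nat.one_mul _).symm
    _ ≤ K' * W := Nat.mul_le_mul_right _ hK'1
  have hP1 : 1 ≤ P := by
    have : 1 ≤ W := by
      have := hT1 j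
      calc 1 = 1 * 1 := rfl
      _ ≤ C * (Sn + T j) := Nat.mul_le_mul hC1 (by omega)
    omega
  -- 2P + 1 ≤ T (j+1) and 3P ≤ M
  have hPu : P ≤ 2 * (K' * C * T j) := by
    have h1 : Sn + T j ≤ 2 * T j := by have := hSnT j; omega
    calc P = K' * (C * (Sn + T j)) := by rw [hPDef, hWDef]
    _ ≤ K' * (C * (2 * T j)) :=
        Nat.mul_le_mul_left _ (Nat.mul_le_mul_left _ h1)
    _ = 2 * (K' * C * T j) := by ring
  have h2PT : 2 * P + 1 ≤ T (j+1) := by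
    have h2 : T (j+1) = 10 * (K' * C * T j) := by
      rw [hTdef]
      show BB^(j+1+1) * Sn = 10 * (K' * C * (BB^(j+1) * Sn))
      rw [hBBdef]
      ring
    have h3 : 1 ≤ K' * C * T j := by
      have := hT1 j
      calc 1 = 1 * 1 * 1 := rfl
      _ ≤ K' * C * T j := Nat.mul_le_mul (Nat.mul_le_mul hK'1 hC1) (hT1 j)
    omega
  have h3PM : 3 * P ≤ M := by
    have h1 : T j ≤ T (C^2) := hTmono hjC2
    have h2 : P ≤ 2 * (K' * C * T (C^2)) := by
      calc P ≤ 2 * (K' * C * T j) := hPu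
      _ ≤ 2 * (K' * C * T (C^2)) := by
            apply Nat.mul_le_mul_left
            exact Nat.mul_le_mul_left _ h1
    have h3 : 6 * (K' * C * T (C^2)) ≤ BB^(C^2+2) * Sn := by
      have : BB^(C^2+2) * Sn = BB * T (C^2) := by
        rw [hTdef]
        show BB^(C^2+2) * Sn = BB * (BB^(C^2+1) * Sn)
        ring
      rw [this, hBBdef]
      calc 6 * (K' * C * T (C^2)) ≤ 10 * (K' * C * T (C^2)) := by
            apply Nat.mul_le_mul_right
            omega
      _ = 10 * K' * C * T (C^2) := by ring
    omega
  -- cross-class separation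
  have hcross : ∀ a b t₁, ¬ E a t₁ → E a b →
      ((I b).2 + T (j+1) < (I t₁).1 ∨ (I t₁).2 + T (j+1) < (I b).1) := by
    intro a b t₁ hnE hab
    have hbne : b ≠ t₁ := by
      rintro rfl; exact hnE hab
    have hnRel : ¬ Rel b t₁ := by
      intro h
      exact hnE (hab.tail h)
    rw [hRelDef] at hnRel
    rcases hIdisj b t₁ hbne with h | h
    · left
      have h1 : ¬ ((I b).2 < (I t₁).1 ∧ (I t₁).1 ≤ (I b).2 + T j) :=
        fun hh => hnRel (Or.inl hh)
      have := hjgood b t₁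
      omega
    · right
      have h2 : ¬ ((I t₁).2 < (I b).1 ∧ (I b).1 ≤ (I t₁).2 + T j) :=
        fun hh => hnRel (Or.inr hh)
      have := hjgood t₁ b
      omega
  have hsep : ∀ a ∈ reps, ∀ b ∈ reps, a ≠ b → (I a).1 < (I b).1 →
      rB a + T (j+1) < (I b).1 := by
    intro a ha b hb hne hlt
    have hnE : ¬ E a b := by
      intro h
      exact hne (hlinj a b (le_antisymm (hrepmin a ha b h) (hrepmin b hb a (hEsymm h))))
    have hnotin : rB a < (I b).1 := by
      by_contra hcon
      push_neg at hcon
      obtain ⟨w, hw1, hw2⟩ := hrBmem a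
      obtain ⟨d, hd1, hd2, hd3⟩ := aux_cover I (T j) Rel hRel_fwd hlr ((I b).1) a
        (le_of_lt hlt) w hw1 (by omega)
      rcases hcross a d b hnE hd1 with h | h
      · have := hTmono (show j ≤ j + 1 by omega)
        omega
      · have := hlr b
        omega
    obtain ⟨w, hw1, hw2⟩ := hrBmem a
    rcases hcross a w b hnE hw1 with h | h
    · omega
    · have := hlr w
      have := hlr b
      omega
  -- the output intervals
  set eIso := reps.orderIsoOfFin rfl with heIsoDef
  set tm : Fin reps.card → Fin r := fun m => ((eIso m : {x // x ∈ reps}) : Fin r) with htmDef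
  have htm : ∀ m, tm m ∈ reps := fun m => (eIso m).2
  have htminj : ∀ m m', tm m = tm m' → m = m' := fun m m' h => eIso.injective (Subtype.ext h)
  set Jf : Fin reps.card → ℕ × ℕ :=
    fun m => (max 1 ((I (tm m)).1 - P), min M (rB (tm m) + P)) with hJfDef
  have hJf1 : ∀ m, (Jf m).1 = max 1 ((I (tm m)).1 - P) := fun m => rfl
  have hJf2 : ∀ m, (Jf m).2 = min M (rB (tm m) + P) := fun m => rfl
  have hJ1le : ∀ m, (Jf m).1 ≤ (I (tm m)).1 := by
    intro m
    rw [hJf1]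
    exact max_le (hIval _).1 (Nat.sub_le _ _)
  have hJ2ge : ∀ m, rB (tm m) ≤ (Jf m).2 := by
    intro m
    rw [hJf2]
    exact le_min (hrBM _) (Nat.le_add_right _ _)
  have hJval : ∀ m, 1 ≤ (Jf m).1 ∧ (Jf m).1 ≤ (Jf m).2 ∧ (Jf m).2 ≤ M := by
    intro m
    refine ⟨by rw [hJf1]; exact le_max_left _ _, ?_, by rw [hJf2]; exact min_le_left _ _⟩
    calc (Jf m).1 ≤ (I (tm m)).1 := hJ1le m
    _ ≤ rB (tm m) := hlrB _
    _ ≤ (Jf m).2 := hJ2ge m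
  have hgen : ∀ m m', (I (tm m)).1 < (I (tm m')).1 → (Jf m).2 < (Jf m').1 := by
    intro m m' hlt
    have hne : tm m ≠ tm m' := by
      intro h
      rw [h] at hlt
      omega
    have hs := hsep (tm m) (htm m) (tm m') (htm m') hne hlt
    have h5 : (Jf m).2 ≤ rB (tm m) + P := by rw [hJf2]; exact min_le_right _ _
    have h6 : (I (tm m')).1 - P ≤ (Jf m').1 := by rw [hJf1]; exact le_max_right _ _
    omega
  have hJdisj : ∀ m m', m ≠ m' → (Jf m).2 < (Jf m').1 ∨ (Jf m').2 < (Jf m).1 := by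
    intro m m' hmm
    have hne : tm m ≠ tm m' := fun h => hmm (htminj _ _ h)
    have hlne : (I (tm m)).1 ≠ (I (tm m')).1 := fun h => hne (hlinj _ _ h)
    rcases lt_or_gt_of_ne hlne with h | h
    · exact Or.inl (hgen m m' h)
    · exact Or.inr (hgen m' m h)
  have hJcont : ∀ m, ∀ t, E (tm m) t → (Jf m).1 ≤ (I t).1 ∧ (I t).2 ≤ (Jf m).2 := by
    intro m t h
    exact ⟨le_trans (hJ1le m) (hrepmin _ (htm m) t h),
      le_trans (hrBub _ t h) (hJ2ge m)⟩
  have hJcov : ∀ t, ∃ m, (Jf m).1 ≤ (I t).1 ∧ (I t).2 ≤ (Jf m).2 := by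
    intro t
    obtain ⟨a, ha, hEat⟩ := hrep_ex t
    refine ⟨eIso.symm ⟨a, ha⟩, ?_⟩
    have htma : tm (eIso.symm ⟨a, ha⟩) = a := by
      rw [htmDef]
      simp
    apply hJcont
    rw [htma]
    exact hEat
  refine ⟨reps.card, Jf, hJval, hJdisj, fun m => ⟨tm m, hJcont m (tm m) (hErefl _)⟩,
    hJcov, ?_⟩
  intro m lB' rB' hLeast hGreatest
  have hset2 : ∀ t, ((Jf m).1 ≤ (I t).1 ∧ (I t).2 ≤ (Jf m).2) ↔ E (tm m) t := by
    intro t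
    constructor
    · intro hcont
      obtain ⟨a', ha', hEa't⟩ := hrep_ex t
      by_cases h : a' = tm m
      · rw [← h]
        exact hEa't
      · exfalso
        have htma : tm (eIso.symm ⟨a', ha'⟩) = a' := by
          rw [htmDef]
          simp
        have hmm : m ≠ eIso.symm ⟨a', ha'⟩ := by
          intro hcon
          apply h
          rw [← htma, ← hcon]
        obtain ⟨hc1, hc2⟩ := hJcont (eIso.symm ⟨a', ha'⟩) t (by rw [htma]; exact hEa't)
        have := hlr t
        rcases hJdisj m _ hmm with hd | hd <;> omega
    · exact hJcont m t
  have hmemL : IsLeast {x | ∃ t, ((Jf m).1 ≤ (I t).1 ∧ (I t).2 ≤ (Jf m).2) ∧ (I t).1 = x}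
      ((I (tm m)).1) := by
    constructor
    · exact ⟨tm m, (hset2 (tm m)).mpr (hErefl _), rfl⟩
    · rintro x ⟨t, hc, rfl⟩
      exact hrepmin _ (htm m) t ((hset2 t).mp hc)
  have hmemG : IsGreatest {x | ∃ t, ((Jf m).1 ≤ (I t).1 ∧ (I t).2 ≤ (Jf m).2) ∧ (I t).2 = x}
      (rB (tm m)) := by
    constructor
    · obtain ⟨w, hw1, hw2⟩ := hrBmem (tm m)
      exact ⟨w, (hset2 w).mpr hw1, hw2.symm⟩
    · rintro x ⟨t, hc, rfl⟩
      exact hrBub _ t ((hset2 t).mp hc)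
  have hlBeq : lB' = (I (tm m)).1 := hLeast.unique hmemL
  have hrBeq : rB' = rB (tm m) := hGreatest.unique hmemG
  subst hlBeq hrBeq
  have hkey : (L^2)^C * ((rB (tm m) : ℝ) - ((I (tm m)).1 : ℝ) + 1) ≤ (P:ℝ) := by
    have h1 : (L^2)^C ≤ (K':ℝ) := by
      have h11 : L^2 ≤ (Kn:ℝ) := by rw [hKndef]; exact Nat.le_ceil _
      calc (L^2)^C ≤ (Kn:ℝ)^C := pow_le_pow_left₀ (sq_nonneg L) h11 C
      _ = (K':ℝ) := by rw [hK'def]; push_cast; ring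
    have h2 : (rB (tm m) : ℝ) - ((I (tm m)).1 : ℝ) + 1 ≤ (W:ℝ) := by
      have hh := hhull (tm m) (htm m)
      have hc : ((rB (tm m) : ℕ) : ℝ) + 1 ≤ ((I (tm m)).1 : ℝ) + (W:ℝ) := by
        exact_mod_cast hh
      linarith
    have h3 : (0:ℝ) ≤ (rB (tm m) : ℝ) - ((I (tm m)).1 : ℝ) + 1 := by
      have hh := hlrB (tm m)
      have hh2 : ((I (tm m)).1 : ℝ) ≤ (rB (tm m) : ℝ) := by exact_mod_cast hh
      linarith
    calc (L^2)^C * ((rB (tm m) : ℝ) - ((I (tm m)).1 : ℝ) + 1) ≤ (K':ℝ) * (W:ℝ) :=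
          mul_le_mul h1 h2 h3 (Nat.cast_nonneg _)
    _ = (P:ℝ) := by rw [hPDef]; push_cast; ring
  have hcaseL : P + 2 ≤ (I (tm m)).1 →
      (L^2)^C * ((rB (tm m) : ℝ) - ((I (tm m)).1 : ℝ) + 1) ≤
        ((I (tm m)).1 : ℝ) - ((Jf m).1 : ℝ) := by
    intro h
    have hJ1 : (Jf m).1 = (I (tm m)).1 - P := by
      rw [hJf1]
      exact max_eq_right (by omega)
    rw [hJ1, Nat.cast_sub (by omega)]
    linarith [hkey]
  have hcaseR : rB (tm m) + P ≤ M →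
      (L^2)^C * ((rB (tm m) : ℝ) - ((I (tm m)).1 : ℝ) + 1) ≤
        ((Jf m).2 : ℝ) - (rB (tm m) : ℝ) := by
    intro h
    have hJ2 : (Jf m).2 = rB (tm m) + P := by
      rw [hJf2]
      exact min_eq_right h
    rw [hJ2]
    push_cast
    linarith [hkey]
  constructor
  · by_cases h : P + 2 ≤ (I (tm m)).1
    · exact Or.inl (hcaseL h)
    · right
      apply hcaseR
      have := hhull (tm m) (htm m)
      omega
  · rintro ⟨h1, h2⟩
    have hl : P + 2 ≤ (I (tm m)).1 := by
      by_contra hcon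
      push_neg at hcon
      apply h1
      rw [hJf1]
      exact max_eq_left (by omega)
    have hr : rB (tm m) + P ≤ M := by
      by_contra hcon
      push_neg at hcon
      apply h2
      rw [hJf2]
      exact min_eq_left (by omega)
    exact ⟨hcaseL hl, hcaseR hr⟩
end

section
/- Let a_1,…,a_{n+1} be non-negative integers with d := max_j a_j ≥ 1, and let b_j = |a_j − a_{j+1}| for 1 ≤ j ≤ n. Fix 1 ≤ l ≤ r ≤ n and suppose b_j ∈ {0,d} for every j with l ≤ j ≤ r, and that b_j = d for at least one such j. Then a_j ∈ {0,d} for every j with l ≤ j ≤ r+1, and a_j = d for at least one such j. (In other words, any {0,d}-block containing a d after one iteration of consecutive differencing must come from a {0,d}-block of greater length containing a d.) -/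
lemma stmt14_key (d x y : ℕ) (hx : x ≤ d) (hy : y ≤ d)
    (h : Nat.dist x y = 0 ∨ Nat.dist x y = d) (hx0 : x = 0 ∨ x = d) :
    y = 0 ∨ y = d := by
  simp [Nat.dist] at h; omega

/-- Let `a 1, …, a (n+1)` be non-negative integers with `d := max_j a j ≥ 1`, and let
`b j = |a j − a (j+1)|` for `1 ≤ j ≤ n`.  Fix `1 ≤ l ≤ r ≤ n` and suppose
`b j ∈ {0, d}` for every `l ≤ j ≤ r`, with `b j = d` for at least one such `j`.
Then `a j ∈ {0, d}` for every `l ≤ j ≤ r + 1`, and `a j = d` for at least one such `j`. -/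
theorem stmt14 (n : ℕ) (a : ℕ → ℕ) (d : ℕ) (hd : 1 ≤ d)
    (hmax : ∀ j, 1 ≤ j → j ≤ n + 1 → a j ≤ d)
    (hattain : ∃ j, 1 ≤ j ∧ j ≤ n + 1 ∧ a j = d)
    (b : ℕ → ℕ) (hb : ∀ j, b j = Nat.dist (a j) (a (j + 1)))
    (l r : ℕ) (hl : 1 ≤ l) (hlr : l ≤ r) (hrn : r ≤ n)
    (hblock : ∀ j, l ≤ j → j ≤ r → b j = 0 ∨ b j = d)
    (hone : ∃ j, l ≤ j ∧ j ≤ r ∧ b j = d) :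
    (∀ j, l ≤ j → j ≤ r + 1 → a j = 0 ∨ a j = d) ∧
      (∃ j, l ≤ j ∧ j ≤ r + 1 ∧ a j = d) := by
  obtain ⟨j0, hj0l, hj0r, hj0d⟩ := hone
  rw [hb] at hj0d
  have hbnd : ∀ j, l ≤ j → j ≤ r + 1 → a j ≤ d := fun j h1 h2 =>
    hmax j (hl.trans h1) (by omega)
  have hx : a j0 ≤ d := hbnd j0 hj0l (by omega)
  have hy : a (j0 + 1) ≤ d := hbnd (j0 + 1) (by omega) (by omega)
  have hsplit : (a j0 = 0 ∧ a (j0 + 1) = d) ∨ (a j0 = d ∧ a (j0 + 1) = 0) := by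
    simp [Nat.dist] at hj0d; omega
  have hj00 : a j0 = 0 ∨ a j0 = d := by omega
  -- forward propagation
  have fwd : ∀ k, j0 + k ≤ r + 1 → a (j0 + k) = 0 ∨ a (j0 + k) = d := by
    intro k
    induction k with
    | zero => intro _; exact hj00
    | succ k ih =>
      intro hk
      have h1 : l ≤ j0 + k := by omega
      have h2 : j0 + k ≤ r := by omega
      have hprev := ih (by omega)
      have hbk := hblock (j0 + k) h1 h2
      rw [hb] at hbk
      have := stmt14_key d (a (j0 + k)) (a (j0 + k + 1))
        (hbnd _ h1 (by omega)) (hbnd _ (by omega) (by omega)) hbk hprev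
      simpa [Nat.add_assoc] using this
  -- backward propagation
  have bwd : ∀ k, l ≤ j0 - k → a (j0 - k) = 0 ∨ a (j0 - k) = d := by
    intro k
    induction k with
    | zero => intro _; exact hj00
    | succ k ih =>
      intro hk
      have hk1 : k + 1 ≤ j0 := by omega
      have heq : j0 - k = (j0 - (k + 1)) + 1 := by omega
      have hprev := ih (by omega)
      have hbk := hblock (j0 - (k + 1)) hk (by omega)
      rw [hb] at hbk
      rw [← heq] at hbk
      refine stmt14_key d (a (j0 - k)) (a (j0 - (k + 1)))
        (hbnd _ (by omega) (by omega)) (hbnd _ hk (by omega)) ?_ hprev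
      rwa [Nat.dist_comm] at hbk
  constructor
  · intro j h1 h2
    rcases le_or_gt j j0 with h | h
    · have := bwd (j0 - j) (by omega)
      rwa [show j0 - (j0 - j) = j by omega] at this
    · have := fwd (j - j0) (by omega)
      rwa [show j0 + (j - j0) = j by omega] at this
  · rcases hsplit with ⟨_, h⟩ | ⟨h, _⟩
    · exact ⟨j0 + 1, by omega, by omega, h⟩
    · exact ⟨j0, by omega, by omega, h⟩
end
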